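/- arXiv:1806.11563 — 4 statements merged into one kernel-verified Lean document; each statement's English description precedes it below -/
import Mathlib

section
/- Let G be a finite group and let H ≤ G be a perfect subgroup. Then the connecting homomorphism of the long exact cohomology sequence associated to the short exact sequence of G-modules 0 → ℤ → ℤ[G/H] → J_{G/H} → 0 gives an injective group homomorphism H²(G, J_{G/H}) ↪ H³(G, ℤ). -/
/-- The permutation representation on `H →₀ k` induced by a `G`-action on `H` (the meaning of
`Representation.ofMulAction` in the older Mathlib). -/
noncomputable def ofMulActionFinsupp (k : Type*) [CommSemiring k] (G : Type*) [Monoid G]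
    (H : Type*) [MulAction G H] : Representation k G (H →₀ k) where
  toFun g := Finsupp.lmapDomain k k (g • ·)
  map_one' := by ext x y; simp
  map_mul' x y := by ext z w; simp [mul_smul]

section ChevalleyInfra

open Finsupp

variable (G : Type) [Group G] [Finite G] (H : Subgroup G)

noncomputable def normElt : (G ⧸ H) →₀ ℤ :=
  Finsupp.equivFunOnFinite.symm (Function.const _ 1)

noncomputable def normSub : Submodule ℤ ((G ⧸ H) →₀ ℤ) :=
  Submodule.span ℤ {normElt G H}

private lemma ofMulAction_normElt (g : G) :
    ofMulActionFinsupp ℤ G (G ⧸ H) g (normElt G H) = normElt G H := by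
  classical
  rw [show ofMulActionFinsupp ℤ G (G ⧸ H) g = Finsupp.lmapDomain ℤ ℤ (g • ·) from rfl,
    Finsupp.lmapDomain_apply]
  ext a
  rw [show ((g • ·) : G ⧸ H → G ⧸ H) = ⇑(MulAction.toPerm g) from rfl,
    Finsupp.mapDomain_equiv_apply]
  rfl

private lemma normSub_le_comap (g : G) :
    normSub G H ≤ (normSub G H).comap (ofMulActionFinsupp ℤ G (G ⧸ H) g) := by
  rw [normSub, Submodule.span_le]
  rintro x hx
  simp only [Set.mem_singleton_iff] at hx
  subst hx
  simp only [SetLike.mem_coe, Submodule.mem_comap, ofMulAction_normElt]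
  exact Submodule.mem_span_singleton_self _

noncomputable def chevalleyRep :
    Representation ℤ G (((G ⧸ H) →₀ ℤ) ⧸ normSub G H) where
  toFun g := Submodule.mapQ _ _ (ofMulActionFinsupp ℤ G (G ⧸ H) g)
    (normSub_le_comap G H g)
  map_one' := by
    apply Submodule.linearMap_qext
    ext x
    simp [Submodule.mapQ_apply]
  map_mul' g₁ g₂ := by
    apply Submodule.linearMap_qext
    ext x
    simp [Submodule.mapQ_apply, Module.End.mul_apply]

noncomputable def chevalley : Rep ℤ G := Rep.of (chevalleyRep G H)

end ChevalleyInfra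

open CategoryTheory groupCohomology

section CochainsFunctoriality

variable {k : Type} [CommRing k] {G : Type} [Group G]

/-- The map of complexes of inhomogeneous cochains induced by a morphism of
representations, given by postcomposition. -/
noncomputable def cochainsPostMap {A B : Rep k G} (φ : A ⟶ B) :
    inhomogeneousCochains A ⟶ inhomogeneousCochains B where
  f m := ModuleCat.ofHom
    { toFun := fun ψ (x : Fin m → G) => φ.hom (ψ x)
      map_add' := fun ψ ψ' => by funext x; exact map_add φ.hom _ _
      map_smul' := fun c ψ => by funext x; exact map_smul φ.hom c _ }
  comm' i j hij := by
    obtain rfl : j = i + 1 := hij.symm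
    ext ψ g
    show (inhomogeneousCochains B).d i (i + 1) (fun x => φ.hom (ψ x)) g
      = φ.hom ((inhomogeneousCochains A).d i (i + 1) ψ g)
    rw [inhomogeneousCochains.d_def, inhomogeneousCochains.d_def]
    erw [inhomogeneousCochains.d_hom_apply, inhomogeneousCochains.d_hom_apply]
    rw [map_add φ.hom, map_sum φ.hom]
    congr 1
    · exact (Rep.hom_comm_apply φ (g 0) _).symm
    · exact Finset.sum_congr rfl fun x _ => by rw [map_smul φ.hom]

end CochainsFunctoriality

section SES

variable (G : Type) [Group G] [Finite G] (H : Subgroup G)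

noncomputable def etaRepHom :
    Rep.trivial ℤ G ℤ ⟶ Rep.of (ofMulActionFinsupp ℤ G (G ⧸ H)) :=
  Rep.ofHom
  { toLinearMap := LinearMap.toSpanSingleton ℤ _ (normElt G H)
    isIntertwining' g := by
      refine LinearMap.ext fun c => ?_
      change LinearMap.toSpanSingleton ℤ _ (normElt G H) c
        = ofMulActionFinsupp ℤ G (G ⧸ H) g (LinearMap.toSpanSingleton ℤ _ (normElt G H) c)
      rw [LinearMap.toSpanSingleton_apply, map_smul, ofMulAction_normElt] }

noncomputable def quotRepHom :
    Rep.of (ofMulActionFinsupp ℤ G (G ⧸ H)) ⟶ chevalley G H :=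
  Rep.ofHom
  { toLinearMap := (normSub G H).mkQ
    isIntertwining' g := by
      refine LinearMap.ext fun (x : (G ⧸ H) →₀ ℤ) => ?_
      change (normSub G H).mkQ (ofMulActionFinsupp ℤ G (G ⧸ H) g x)
        = chevalleyRep G H g ((normSub G H).mkQ x)
      rw [Submodule.mkQ_apply, Submodule.mkQ_apply]
      show Submodule.Quotient.mk (ofMulActionFinsupp ℤ G (G ⧸ H) g x)
        = Submodule.mapQ _ _ (ofMulActionFinsupp ℤ G (G ⧸ H) g)
            (normSub_le_comap G H g) (Submodule.Quotient.mk x)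
      rw [Submodule.mapQ_apply] }

noncomputable def sesCochainComplexes :
    ShortComplex (HomologicalComplex (ModuleCat ℤ) (ComplexShape.up ℕ)) :=
  ShortComplex.mk (cochainsPostMap (etaRepHom G H)) (cochainsPostMap (quotRepHom G H)) (by
    ext m ψ x
    show (normSub G H).mkQ (LinearMap.toSpanSingleton ℤ _ (normElt G H) (ψ x)) = 0
    rw [Submodule.mkQ_apply, Submodule.Quotient.mk_eq_zero, normSub,
      LinearMap.span_singleton_eq_range]
    exact LinearMap.mem_range_self _ _)

lemma normElt_ne_zero : normElt G H ≠ 0 := by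
  intro h
  have h1 : (normElt G H) ((1 : G) : G ⧸ H) = 1 := rfl
  rw [h] at h1
  simp at h1

lemma sesCochainComplexes_shortExact : (sesCochainComplexes G H).ShortExact := by
  apply HomologicalComplex.shortExact_of_degreewise_shortExact
  intro i
  refine ShortComplex.ShortExact.mk' ?_ ?_ ?_
  · rw [ShortComplex.moduleCat_exact_iff]
    intro ψ hψ
    have mem : ∀ x : Fin i → G, (ψ : (Fin i → G) → ((G ⧸ H) →₀ ℤ)) x ∈ normSub G H := by
      intro x
      rw [← Submodule.Quotient.mk_eq_zero]
      exact congrFun hψ x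
    choose c hc using fun x => Submodule.mem_span_singleton.1 (mem x)
    exact ⟨c, funext fun x => hc x⟩
  · rw [ModuleCat.mono_iff_injective]
    intro ψ ψ' h
    funext x
    exact smul_left_injective ℤ (normElt_ne_zero G H) (congrFun h x)
  · rw [ModuleCat.epi_iff_surjective]
    intro Ψ
    choose ψ hψ using fun x : Fin i → G =>
      Submodule.Quotient.mk_surjective (normSub G H)
        ((Ψ : (Fin i → G) → (((G ⧸ H) →₀ ℤ) ⧸ normSub G H)) x)
    exact ⟨ψ, funext fun x => hψ x⟩

end SES

section QModZ

open Finsupp groupCohomology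

variable (G : Type) [Group G] [Finite G] (H : Subgroup G)

/-- The inclusion `ℤ[G/H] →ₗ ℚ[G/H]`. -/
noncomputable def castMap : ((G ⧸ H) →₀ ℤ) →ₗ[ℤ] ((G ⧸ H) →₀ ℚ) :=
  Finsupp.mapRange.linearMap (Int.castAddHom ℚ).toIntLinearMap

lemma castMap_apply (m : (G ⧸ H) →₀ ℤ) (p : G ⧸ H) :
    castMap G H m p = (m p : ℚ) := by
  simp [castMap]

/-- `ℚ[G/H]` as a `ℤ`-linear representation of `G`. -/
noncomputable def qRep : Representation ℤ G ((G ⧸ H) →₀ ℚ) where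
  toFun g := (ofMulActionFinsupp ℚ G (G ⧸ H) g).restrictScalars ℤ
  map_one' := by
    ext x
    simp
  map_mul' g₁ g₂ := by
    ext x
    simp

lemma ofMulActionFinsupp_apply {k : Type} [CommSemiring k] (g : G) (m : (G ⧸ H) →₀ k)
    (p : G ⧸ H) : ofMulActionFinsupp k G (G ⧸ H) g m p = m (g⁻¹ • p) := by
  classical
  show Finsupp.mapDomain (g • ·) m p = m (g⁻¹ • p)
  rw [show ((g • ·) : G ⧸ H → G ⧸ H) = ⇑(MulAction.toPerm g) from rfl,
    Finsupp.mapDomain_equiv_apply]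
  rfl

lemma qRep_apply (g : G) (m : (G ⧸ H) →₀ ℚ) (p : G ⧸ H) :
    qRep G H g m p = m (g⁻¹ • p) :=
  ofMulActionFinsupp_apply G H g m p

lemma qRep_rat_smul (g : G) (q : ℚ) (m : (G ⧸ H) →₀ ℚ) :
    qRep G H g (q • m) = q • qRep G H g m :=
  (ofMulActionFinsupp ℚ G (G ⧸ H) g).map_smul q m

/-- The copy of `ℤ[G/H]` inside `ℚ[G/H]`. -/
noncomputable def zSub : Submodule ℤ ((G ⧸ H) →₀ ℚ) :=
  LinearMap.range (castMap G H)

lemma mem_zSub_iff (m : (G ⧸ H) →₀ ℚ) :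
    m ∈ zSub G H ↔ ∀ p : G ⧸ H, ∃ n : ℤ, (n : ℚ) = m p := by
  constructor
  · rintro ⟨c, rfl⟩ p
    exact ⟨c p, (castMap_apply G H c p).symm⟩
  · intro h
    choose n hn using h
    refine ⟨Finsupp.equivFunOnFinite.symm n, ?_⟩
    ext p
    rw [castMap_apply]
    exact (congrArg _ (congrFun (Finsupp.coe_equivFunOnFinite_symm n) p)).trans (hn p)

private lemma zSub_le_comap (g : G) :
    zSub G H ≤ (zSub G H).comap (qRep G H g) := by
  rintro x ⟨c, rfl⟩
  refine ⟨ofMulActionFinsupp ℤ G (G ⧸ H) g c, ?_⟩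
  ext p
  rw [castMap_apply, ofMulActionFinsupp_apply G H, qRep_apply, castMap_apply]

/-- The quotient representation `ℚ[G/H]/ℤ[G/H]`. -/
noncomputable def qzRep :
    Representation ℤ G (((G ⧸ H) →₀ ℚ) ⧸ zSub G H) where
  toFun g := Submodule.mapQ _ _ (qRep G H g) (zSub_le_comap G H g)
  map_one' := by
    apply Submodule.linearMap_qext
    ext x
    simp [Submodule.mapQ_apply]
  map_mul' g₁ g₂ := by
    apply Submodule.linearMap_qext
    ext x
    simp [Submodule.mapQ_apply, Module.End.mul_apply]

lemma qzRep_mk (g : G) (m : (G ⧸ H) →₀ ℚ) :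
    qzRep G H g (Submodule.Quotient.mk m) = Submodule.Quotient.mk (qRep G H g m) :=
  rfl

noncomputable abbrev repAQ : Rep ℤ G := Rep.of (qRep G H)

noncomputable abbrev repAQZ : Rep ℤ G := Rep.of (qzRep G H)

noncomputable def castRepHom :
    Rep.of (ofMulActionFinsupp ℤ G (G ⧸ H)) ⟶ repAQ G H :=
  Rep.ofHom
  { toLinearMap := castMap G H
    isIntertwining' g := by
      refine LinearMap.ext fun (x : (G ⧸ H) →₀ ℤ) => ?_
      change castMap G H (ofMulActionFinsupp ℤ G (G ⧸ H) g x)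
        = qRep G H g (castMap G H x)
      ext p
      rw [castMap_apply, ofMulActionFinsupp_apply G H, qRep_apply, castMap_apply] }

noncomputable def qzQuotRepHom : repAQ G H ⟶ repAQZ G H :=
  Rep.ofHom
  { toLinearMap := (zSub G H).mkQ
    isIntertwining' g := by
      refine LinearMap.ext fun (x : (G ⧸ H) →₀ ℚ) => ?_
      change (zSub G H).mkQ (qRep G H g x) = qzRep G H g ((zSub G H).mkQ x)
      rw [Submodule.mkQ_apply, Submodule.mkQ_apply, qzRep_mk] }

noncomputable def sesQ :
    ShortComplex (HomologicalComplex (ModuleCat ℤ) (ComplexShape.up ℕ)) :=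
  ShortComplex.mk (cochainsPostMap (castRepHom G H)) (cochainsPostMap (qzQuotRepHom G H)) (by
    ext m ψ x
    show (zSub G H).mkQ (castMap G H (ψ x)) = 0
    rw [Submodule.mkQ_apply, Submodule.Quotient.mk_eq_zero]
    exact LinearMap.mem_range_self _ _)

lemma sesQ_shortExact : (sesQ G H).ShortExact := by
  apply HomologicalComplex.shortExact_of_degreewise_shortExact
  intro i
  refine ShortComplex.ShortExact.mk' ?_ ?_ ?_
  · rw [ShortComplex.moduleCat_exact_iff]
    intro ψ hψ
    have mem : ∀ x : Fin i → G,
        (ψ : (Fin i → G) → ((G ⧸ H) →₀ ℚ)) x ∈ zSub G H := by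
      intro x
      rw [← Submodule.Quotient.mk_eq_zero]
      exact congrFun hψ x
    choose c hc using fun x => mem x
    exact ⟨c, funext fun x => hc x⟩
  · rw [ModuleCat.mono_iff_injective]
    intro ψ ψ' h
    funext x
    have h'' : castMap G H ((ψ : (Fin i → G) → ((G ⧸ H) →₀ ℤ)) x)
        = castMap G H ((ψ' : (Fin i → G) → ((G ⧸ H) →₀ ℤ)) x) := congrFun h x
    apply Finsupp.ext
    intro p
    have h3 := congrArg (fun (v : (G ⧸ H) →₀ ℚ) => v p) h''
    simp only [castMap_apply] at h3
    exact_mod_cast h3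
  · rw [ModuleCat.epi_iff_surjective]
    intro Ψ
    choose ψ hψ using fun x : Fin i → G =>
      Submodule.Quotient.mk_surjective (zSub G H)
        ((Ψ : (Fin i → G) → (((G ⧸ H) →₀ ℚ) ⧸ zSub G H)) x)
    exact ⟨ψ, funext fun x => hψ x⟩

/-! ### Vanishing of `H²(G, ℚ[G/H])` -/

lemma subsingleton_H2_repAQ : Subsingleton (groupCohomology (repAQ G H) 2) := by
  classical
  have : Fintype G := Fintype.ofFinite G
  have hcob : ∀ f : cocycles₂ (repAQ G H), ⇑f ∈ coboundaries₂ (repAQ G H) := by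
    intro f
    set F : G × G → ((G ⧸ H) →₀ ℚ) := fun p => (f p : (G ⧸ H) →₀ ℚ) with hFdef
    have key : ∀ g h j : G, qRep G H g (F (h, j)) - F (g * h, j)
        + F (g, h * j) - F (g, h) = 0 :=
      (mem_cocycles₂_def (A := repAQ G H) (f : G × G → repAQ G H)).1 f.2
    set S : G → ((G ⧸ H) →₀ ℚ) := fun g => ∑ x : G, F (g, x) with hS
    have hN : (Fintype.card G : ℚ) ≠ 0 := by
      exact_mod_cast Fintype.card_ne_zero
    have hNS : ∀ g h : G,
        qRep G H g (S h) - S (g * h) + S g = (Fintype.card G : ℚ) • F (g, h) := by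
      intro g h
      have sum0 : ∑ j : G, (qRep G H g (F (h, j)) - F (g * h, j)
          + F (g, h * j) - F (g, h)) = (0 : (G ⧸ H) →₀ ℚ) := by
        simp [key g h]
      have e1 : ∑ j : G, qRep G H g (F (h, j)) = qRep G H g (S h) := by
        rw [hS, map_sum]
      have e2 : ∑ j : G, F (g, h * j) = S g := by
        rw [hS]
        exact Fintype.sum_equiv (Equiv.mulLeft h) _ _ fun j => rfl
      have e3 : ∑ j : G, F (g * h, j) = S (g * h) := rfl
      have e4 : ∑ _j : G, F (g, h) = (Fintype.card G : ℚ) • F (g, h) := by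
        rw [Finset.sum_const, Finset.card_univ, Nat.cast_smul_eq_nsmul]
      rw [Finset.sum_sub_distrib, Finset.sum_add_distrib, Finset.sum_sub_distrib,
        e1, e2, e3, e4] at sum0
      exact sub_eq_zero.1 sum0
    refine ⟨fun g => (((Fintype.card G : ℚ)⁻¹ • S g : (G ⧸ H) →₀ ℚ) : repAQ G H),
        funext fun gh => ?_⟩
    obtain ⟨g, h⟩ := gh
    rw [d₁₂_hom_apply]
    show qRep G H g ((Fintype.card G : ℚ)⁻¹ • S h)
        - (Fintype.card G : ℚ)⁻¹ • S (g * h)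
        + (Fintype.card G : ℚ)⁻¹ • S g = F (g, h)
    rw [qRep_rat_smul, ← smul_sub, ← smul_add, hNS g h, smul_smul,
      inv_mul_cancel₀ hN, one_smul]
  have h0 : ∀ c : groupCohomology (repAQ G H) 2, c = 0 := fun c =>
    H2_induction_on c fun x => (H2π_eq_zero_iff x).2 (hcob x)
  exact ⟨fun a b => by rw [h0 a, h0 b]⟩

/-! ### Vanishing of `H¹(G, ℚ[G/H]/ℤ[G/H])` when `H` is perfect -/

/-- The copy of `ℤ` inside `ℚ`. -/
noncomputable def zInQ : Submodule ℤ ℚ := Submodule.span ℤ {(1 : ℚ)}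

lemma intCast_mem_zInQ (n : ℤ) : (n : ℚ) ∈ zInQ := by
  rw [zInQ, Submodule.mem_span_singleton]
  exact ⟨n, by simp⟩

lemma mem_zInQ_iff (q : ℚ) : q ∈ zInQ ↔ ∃ n : ℤ, (n : ℚ) = q := by
  rw [zInQ, Submodule.mem_span_singleton]
  constructor
  · rintro ⟨n, rfl⟩; exact ⟨n, by simp⟩
  · rintro ⟨n, rfl⟩; exact ⟨n, by simp⟩

/-- Evaluation at `p : G/H` as a map `ℚ[G/H]/ℤ[G/H] → ℚ/ℤ`. -/
noncomputable def evQZ (p : G ⧸ H) :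
    ((((G ⧸ H) →₀ ℚ) ⧸ zSub G H) →ₗ[ℤ] (ℚ ⧸ zInQ)) :=
  Submodule.mapQ (zSub G H) zInQ (Finsupp.lapply p) (by
    rintro x ⟨c, rfl⟩
    simp only [Submodule.mem_comap, Finsupp.lapply_apply]
    rw [castMap_apply]
    exact intCast_mem_zInQ (c p))

lemma evQZ_mk (p : G ⧸ H) (m : (G ⧸ H) →₀ ℚ) :
    evQZ G H p (Submodule.Quotient.mk m) = Submodule.Quotient.mk (m p) :=
  rfl

lemma evQZ_rep (g : G) (p : G ⧸ H) (m : ((G ⧸ H) →₀ ℚ) ⧸ zSub G H) :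
    evQZ G H p (qzRep G H g m) = evQZ G H (g⁻¹ • p) m := by
  obtain ⟨m, rfl⟩ := Submodule.Quotient.mk_surjective _ m
  rw [qzRep_mk, evQZ_mk, evQZ_mk, qRep_apply]

lemma evQZ_inj (m : ((G ⧸ H) →₀ ℚ) ⧸ zSub G H)
    (h : ∀ p : G ⧸ H, evQZ G H p m = 0) : m = 0 := by
  obtain ⟨m, rfl⟩ := Submodule.Quotient.mk_surjective _ m
  rw [Submodule.Quotient.mk_eq_zero]
  rw [mem_zSub_iff]
  intro p
  have := h p
  rw [evQZ_mk, Submodule.Quotient.mk_eq_zero, mem_zInQ_iff] at this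
  exact this

lemma subsingleton_H1_repAQZ (hH : commutator ↥H = ⊤) :
    Subsingleton (groupCohomology (repAQZ G H) 1) := by
  classical
  have hcob : ∀ f : cocycles₁ (repAQZ G H), ⇑f ∈ coboundaries₁ (repAQZ G H) := by
    intro f
    set fc : G → (((G ⧸ H) →₀ ℚ) ⧸ zSub G H) :=
      fun g => (f g : ((G ⧸ H) →₀ ℚ) ⧸ zSub G H) with hfc
    have hf : ∀ g h : G, fc (g * h) = qzRep G H g (fc h) + fc g :=
      (mem_cocycles₁_iff (A := repAQZ G H) (f : G → repAQZ G H)).1 f.2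
    have smul_mk : ∀ (g x : G), g • ((x : G ⧸ H)) = ((g * x : G) : G ⧸ H) :=
      fun g x => MulAction.Quotient.smul_mk H g x
    have inv_smul_one : ∀ h : G, h ∈ H →
        (h⁻¹ • (((1 : G) : G ⧸ H))) = (((1 : G) : G ⧸ H)) := by
      intro h hh
      rw [smul_mk, mul_one]
      exact QuotientGroup.eq.2 (by simpa using hh)
    have hone : fc (1 : G) = 0 := cocycles₁_map_one f
    -- the restriction to `H` evaluated at the trivial coset vanishes
    have hHom : ∀ h : G, h ∈ H → evQZ G H ((1 : G) : G ⧸ H) (fc h) = 0 := by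
      set φ : ↥H →* Multiplicative (ℚ ⧸ zInQ) :=
        { toFun := fun h => Multiplicative.ofAdd (evQZ G H ((1 : G) : G ⧸ H) (fc (h : G)))
          map_one' := by
            show Multiplicative.ofAdd (evQZ G H ((1 : G) : G ⧸ H) (fc ((1 : ↥H) : G))) = 1
            rw [show ((1 : ↥H) : G) = (1 : G) from rfl, hone, map_zero]
            rfl
          map_mul' := fun h₁ h₂ => by
            simp only [← ofAdd_add]
            congr 1
            rw [show ((h₁ * h₂ : ↥H) : G) = (h₁ : G) * (h₂ : G) from rfl,
              hf (h₁ : G) (h₂ : G), map_add, evQZ_rep, inv_smul_one _ h₁.2, add_comm] } with hφ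
      have hker : (⊤ : Subgroup ↥H) ≤ φ.ker := by
        rw [← hH]; exact Abelianization.commutator_subset_ker φ
      intro h hh
      have := hker (Subgroup.mem_top ⟨h, hh⟩)
      rw [MonoidHom.mem_ker, hφ] at this
      exact congrArg Multiplicative.toAdd this
    -- the function whose coboundary `f` is
    set Fv : G → ℚ ⧸ zInQ := fun x => evQZ G H (x : G ⧸ H) (fc x) with hFv
    have hFy : ∀ z : G, Fv z = evQZ G H (z : G ⧸ H) (fc z) := fun z => rfl
    have hFc : ∀ (x h : G), h ∈ H → Fv (x * h) = Fv x := by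
      intro x h hh
      rw [hFy, hFy]
      have e1 : ((x * h : G) : G ⧸ H) = (x : G ⧸ H) :=
        QuotientGroup.mk_mul_of_mem x hh
      have e2 : (x⁻¹ • ((x : G) : G ⧸ H)) = (((1 : G) : G ⧸ H)) := by
        rw [smul_mk, inv_mul_cancel]
      rw [e1, hf x h, map_add, evQZ_rep, e2, hHom h hh, zero_add]
    set B : G ⧸ H → ℚ ⧸ zInQ := fun p => Quotient.liftOn' p Fv (by
      intro a b hab
      rw [QuotientGroup.leftRel_apply] at hab
      have hab2 : b = a * (a⁻¹ * b) := by group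
      rw [hab2, hFc a _ hab]) with hB
    have hBmk : ∀ x : G, B ((x : G ⧸ H)) = Fv x := fun x => rfl
    choose q hq using fun p : G ⧸ H =>
      Submodule.Quotient.mk_surjective zInQ (B p)
    set b₂ : (G ⧸ H) →₀ ℚ := Finsupp.equivFunOnFinite.symm q with hb₂
    set b : ((G ⧸ H) →₀ ℚ) ⧸ zSub G H := Submodule.Quotient.mk b₂ with hb
    have hevb : ∀ p : G ⧸ H, evQZ G H p b = B p := by
      intro p
      rw [hb, evQZ_mk, hb₂]
      rw [show (Finsupp.equivFunOnFinite.symm q) p = q p from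
        congrFun (Finsupp.coe_equivFunOnFinite_symm q) p]
      exact hq p
    have hfx : ∀ (x : G) (p : G ⧸ H), evQZ G H p (fc x) = B p - B (x⁻¹ • p) := by
      intro x p
      induction p using QuotientGroup.induction_on with
      | H y =>
        have e3 : (x⁻¹ • ((y : G) : G ⧸ H)) = ((x⁻¹ * y : G) : G ⧸ H) := smul_mk x⁻¹ y
        have h6 : fc y = qzRep G H x (fc (x⁻¹ * y)) + fc x := by
          have := hf x (x⁻¹ * y)
          rwa [mul_inv_cancel_left] at this
        have h4 := congrArg (evQZ G H ((y : G) : G ⧸ H)) h6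
        rw [map_add, evQZ_rep, e3] at h4
        rw [e3, hBmk, hBmk, hFy, hFy, h4]
        abel
    refine ⟨((-b : ((G ⧸ H) →₀ ℚ) ⧸ zSub G H) : repAQZ G H), funext fun x => ?_⟩
    rw [d₀₁_hom_apply]
    show qzRep G H x (-b) - (-b) = fc x
    have heq : ∀ p : G ⧸ H,
        evQZ G H p (qzRep G H x (-b) - (-b)) = evQZ G H p (fc x) := by
      intro p
      have t1 : qzRep G H x (-b) = -(qzRep G H x b) := map_neg _ _
      rw [t1, sub_neg_eq_add, map_add, map_neg, evQZ_rep, hevb, hevb, hfx]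
      abel
    have h0 : (qzRep G H x (-b) - (-b)) - fc x = 0 := by
      apply evQZ_inj
      intro p
      rw [map_sub, heq, sub_self]
    exact sub_eq_zero.1 h0
  have h0 : ∀ c : groupCohomology (repAQZ G H) 1, c = 0 := fun c =>
    H1_induction_on c fun x => (H1π_eq_zero_iff x).2 (hcob x)
  exact ⟨fun a b => by rw [h0 a, h0 b]⟩

/-! ### Vanishing of `H²(G, ℤ[G/H])` -/

lemma subsingleton_H2_perm (hH : commutator ↥H = ⊤) :
    Subsingleton (groupCohomology (Rep.of (ofMulActionFinsupp ℤ G (G ⧸ H))) 2) := by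
  have h1 : Subsingleton (groupCohomology (repAQZ G H) 1) :=
    subsingleton_H1_repAQZ G H hH
  have h2 : Subsingleton (groupCohomology (repAQ G H) 2) :=
    subsingleton_H2_repAQ G H
  have hex := (sesQ_shortExact G H).homology_exact₁ 1 2 rfl
  rw [ShortComplex.moduleCat_exact_iff] at hex
  constructor
  intro a b
  have ha : HomologicalComplex.homologyMap (sesQ G H).f 2 a = 0 :=
    @Subsingleton.elim _ h2 _ _
  have hb : HomologicalComplex.homologyMap (sesQ G H).f 2 b = 0 :=
    @Subsingleton.elim _ h2 _ _
  obtain ⟨x, hx⟩ := hex a ha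
  obtain ⟨y, hy⟩ := hex b hb
  have hxy : x = y := @Subsingleton.elim _ h1 _ _
  rw [← hx, ← hy, hxy]

end QModZ

/-- **The connecting homomorphism `H²(G, J_{G/H}) → H³(G, ℤ)` is injective for a perfect
subgroup `H`** (step in the proof of Proposition 2.8 of the paper). Let `G` be a finite
group and `H ≤ G` a perfect subgroup. Then the connecting homomorphism of the long exact
cohomology sequence associated to the short exact sequence of `G`-modules
`0 → ℤ → ℤ[G/H] → J_{G/H} → 0` is an injective group homomorphism
`H²(G, J_{G/H}) ↪ H³(G, ℤ)`. -/
theorem connecting_hom_injective (G : Type) [Group G] [Finite G] (H : Subgroup G)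
    (hH : commutator ↥H = ⊤) :
    Function.Injective
      ((sesCochainComplexes_shortExact G H).δ 2 3 rfl :
        groupCohomology (chevalley G H) 2 ⟶ groupCohomology (Rep.trivial ℤ G ℤ) 3) := by
  have hsub : Subsingleton
      (groupCohomology (Rep.of (ofMulActionFinsupp ℤ G (G ⧸ H))) 2) :=
    subsingleton_H2_perm G H hH
  have hex := (sesCochainComplexes_shortExact G H).homology_exact₃ 2 3 rfl
  rw [ShortComplex.moduleCat_exact_iff] at hex
  intro a b hab
  have h0 : ((sesCochainComplexes_shortExact G H).δ 2 3 rfl) (a - b) = 0 := by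
    rw [map_sub, hab, sub_self]
  obtain ⟨x, hx⟩ := hex (a - b) h0
  have hx0 : x = 0 := @Subsingleton.elim _ hsub _ _
  rw [hx0, map_zero] at hx
  exact sub_eq_zero.1 hx.symm
end

section
/- Let n ≥ 4 and let U be the group with generators z, t_1, …, t_{n−1} and the Schur relations. Then there is a surjective group homomorphism π : U → S_n with π(z) = 1 and π(t_i) = (i, i+1) for each i, whose kernel is K = ⟨z⟩; moreover z is central in U, z² = 1, z ≠ 1, and z ∈ [U,U], so that U is a stem extension of S_n with kernel of order 2 (in particular |U| = 2·n!). -/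
/-- The generator type for Schur's presentation of a double cover of `Sₙ`:
`none` stands for the central element `z`, and `some i` (for `i : Fin (n-1)`) stands
for the generator `t_{i+1}` (which will map to the transposition `(i+1, i+2)` of
`{1, ..., n}`). -/
abbrev SchurGen (n : ℕ) := Option (Fin (n - 1))

/-- The relators of Schur's presentation: `z² = 1`; `z tᵢ = tᵢ z`; `tᵢ² = z`;
`(tᵢ tᵢ₊₁)³ = z`; and `tᵢ tⱼ = z tⱼ tᵢ` for `|i - j| ≥ 2`. -/
def schurRels (n : ℕ) : Set (FreeGroup (SchurGen n)) :=
  let z : FreeGroup (SchurGen n) := FreeGroup.of none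
  let t : Fin (n - 1) → FreeGroup (SchurGen n) := fun i => FreeGroup.of (some i)
  {z ^ 2}
    ∪ {r | ∃ i, r = (z * t i) * (t i * z)⁻¹}
    ∪ {r | ∃ i, r = t i ^ 2 * z⁻¹}
    ∪ {r | ∃ i j : Fin (n - 1), (j : ℕ) = (i : ℕ) + 1 ∧ r = (t i * t j) ^ 3 * z⁻¹}
    ∪ {r | ∃ i j : Fin (n - 1), ((i : ℕ) + 2 ≤ (j : ℕ) ∨ (j : ℕ) + 2 ≤ (i : ℕ)) ∧
        r = (t i * t j) * (z * t j * t i)⁻¹}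


namespace SchurAux


variable {G : Type*} [Group G]

/-- The descending word `t m * t (m-1) * ⋯ * t (m-k+1)`. -/
def cw (t : ℕ → G) (m : ℕ) : ℕ → G
  | 0 => 1
  | k + 1 => cw t m k * t (m - k)

theorem cw_mem {t : ℕ → G} {H : Subgroup G} (ht : ∀ i, t i ∈ H) (m k : ℕ) :
    cw t m k ∈ H := by
  induction k with
  | zero => exact one_mem H
  | succ k ih => exact mul_mem ih (ht _)

section
variable {t : ℕ → G} {m : ℕ}

theorem K1 (h3 : ∀ i j, i + 2 ≤ j → j ≤ m → t i * t j = t j * t i) :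
    ∀ k i, i + 2 + k ≤ m + 1 → t i * cw t m k = cw t m k * t i := by
  intro k
  induction k with
  | zero => intro i _; simp [cw]
  | succ k ih =>
    intro i hi
    have e1 : t i * cw t m k = cw t m k * t i := ih i (by omega)
    have e2 : t i * t (m - k) = t (m - k) * t i := h3 i (m - k) (by omega) (by omega)
    show t i * (cw t m k * t (m - k)) = cw t m k * t (m - k) * t i
    rw [← mul_assoc, e1, mul_assoc, e2, ← mul_assoc]

theorem K2 (h1 : ∀ i, t i * t i = 1)
    (h2 : ∀ i, i + 1 ≤ m → t i * t (i + 1) * t i = t (i + 1) * t i * t (i + 1))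
    (h3 : ∀ i j, i + 2 ≤ j → j ≤ m → t i * t j = t j * t i) :
    ∀ k i, k ≤ m + 1 → m + 2 ≤ i + k → i ≤ m →
      cw t m k * t i = t (i - 1) * cw t m k := by
  intro k
  induction k with
  | zero => intro i _ _ _; omega
  | succ k ih =>
    intro i hk hik him
    by_cases hcase : i + k = m + 1
    · obtain ⟨k', rfl⟩ : ∃ k', k = k' + 1 := ⟨k - 1, by omega⟩
      have e1 : m - k' = i := by omega
      have e2 : m - (k' + 1) = i - 1 := by omega
      have hbraid : t i * t (i - 1) * t i = t (i - 1) * t i * t (i - 1) := by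
        have h := h2 (i - 1) (by omega)
        rw [show i - 1 + 1 = i by omega] at h
        exact h.symm
      have hcomm : t (i - 1) * cw t m k' = cw t m k' * t (i - 1) :=
        K1 h3 k' (i - 1) (by omega)
      show cw t m k' * t (m - k') * t (m - (k' + 1)) * t i
          = t (i - 1) * (cw t m k' * t (m - k') * t (m - (k' + 1)))
      rw [e1, e2]
      calc cw t m k' * t i * t (i - 1) * t i
          = cw t m k' * (t i * t (i - 1) * t i) := by simp [mul_assoc]
        _ = cw t m k' * (t (i - 1) * t i * t (i - 1)) := by rw [hbraid]
        _ = cw t m k' * t (i - 1) * (t i * t (i - 1)) := by simp [mul_assoc]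
        _ = t (i - 1) * cw t m k' * (t i * t (i - 1)) := by rw [← hcomm]
        _ = t (i - 1) * (cw t m k' * t i * t (i - 1)) := by simp [mul_assoc]
    · have e2 : t (m - k) * t i = t i * t (m - k) := h3 (m - k) i (by omega) him
      show cw t m k * t (m - k) * t i = t (i - 1) * (cw t m k * t (m - k))
      rw [mul_assoc, e2, ← mul_assoc, ih i (by omega) (by omega) him, mul_assoc]

theorem stepLem (h1 : ∀ i, t i * t i = 1)
    (h2 : ∀ i, i + 1 ≤ m → t i * t (i + 1) * t i = t (i + 1) * t i * t (i + 1))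
    (h3 : ∀ i j, i + 2 ≤ j → j ≤ m → t i * t j = t j * t i) :
    ∀ k i, k ≤ m + 1 → i ≤ m → ∃ k', k' ≤ m + 1 ∧ ∃ h : G,
      (h = 1 ∨ ∃ j, j < m ∧ h = t j) ∧ cw t m k * t i = h * cw t m k' := by
  intro k i hk hi
  rcases Nat.lt_or_ge (i + k) m with hlt | hge
  · exact ⟨k, hk, t i, Or.inr ⟨i, by omega, rfl⟩, (K1 h3 k i (by omega)).symm⟩
  rcases Nat.eq_or_lt_of_le hge with heq | hgt
  · refine ⟨k + 1, by omega, 1, Or.inl rfl, ?_⟩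
    rw [one_mul]
    show _ = cw t m k * t (m - k)
    rw [show m - k = i by omega]
  rcases Nat.eq_or_lt_of_le hgt with heq2 | hgt2
  · obtain ⟨k', rfl⟩ : ∃ k', k = k' + 1 := ⟨k - 1, by omega⟩
    refine ⟨k', by omega, 1, Or.inl rfl, ?_⟩
    rw [one_mul]
    show cw t m k' * t (m - k') * t i = cw t m k'
    rw [show m - k' = i by omega, mul_assoc, h1 i, mul_one]
  · exact ⟨k, hk, t (i - 1), Or.inr ⟨i - 1, by omega, rfl⟩,
      K2 h1 h2 h3 k i hk (by omega) hi⟩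

end

theorem coxBound : ∀ (m : ℕ) {G : Type u} [Group G] (t : ℕ → G),
    (∀ i, m ≤ i → t i = 1) → (∀ i, t i * t i = 1) →
    (∀ i, i + 2 ≤ m → t i * t (i + 1) * t i = t (i + 1) * t i * t (i + 1)) →
    (∀ i j, i + 2 ≤ j → j + 1 ≤ m → t i * t j = t j * t i) →
    Finite (Subgroup.closure (Set.range t)) ∧
      Nat.card (Subgroup.closure (Set.range t)) ≤ (m + 1).factorial := by
  intro m
  induction m with
  | zero =>
    intro G _ t hjunk _ _ _
    have ht : t = fun _ => (1 : G) := funext fun i => hjunk i (Nat.zero_le i)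
    have hr : Set.range t = {1} := by rw [ht]; exact Set.range_const
    rw [hr, Subgroup.closure_singleton_one]
    haveI : Unique (⊥ : Subgroup G) := ⟨⟨1⟩, fun a => Subtype.ext (Subgroup.mem_bot.1 a.2)⟩
    exact ⟨inferInstance, by simp [Nat.card_unique]⟩
  | succ m IH =>
    intro G _ t hjunk h1 h2 h3
    have h2K : ∀ i, i + 1 ≤ m → t i * t (i + 1) * t i = t (i + 1) * t i * t (i + 1) :=
      fun i hi => h2 i (by omega)
    have h3K : ∀ i j, i + 2 ≤ j → j ≤ m → t i * t j = t j * t i :=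
      fun i j ha hb => h3 i j ha (by omega)
    set t' : ℕ → G := fun i => if i < m then t i else 1 with ht'
    obtain ⟨hfin, hcard⟩ := IH t'
      (fun i hi => by simp [ht', Nat.not_lt.2 hi])
      (fun i => by by_cases h : i < m <;> simp [ht', h, h1 i])
      (fun i hi => by
        simp only [ht', if_pos (show i < m by omega), if_pos (show i + 1 < m by omega)]
        exact h2 i (by omega))
      (fun i j ha hb => by
        simp only [ht', if_pos (show i < m by omega), if_pos (show j < m by omega)]
        exact h3 i j ha (by omega))
    set H := Subgroup.closure (Set.range t') with hH
    set X := Subgroup.closure (Set.range t) with hX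
    have HleX : H ≤ X := by
      rw [hH]
      refine (Subgroup.closure_le X).2 ?_
      rintro x ⟨i, rfl⟩
      by_cases h : i < m
      · simpa [ht', h] using Subgroup.subset_closure (Set.mem_range_self i)
      · simp only [ht', if_neg h]; exact one_mem X
    have rmemX : ∀ k, cw t m k ∈ X :=
      fun k => cw_mem (fun i => Subgroup.subset_closure (Set.mem_range_self i)) m k
    set P : G → Prop := fun u => ∃ k, k ≤ m + 1 ∧ ∃ h, h ∈ H ∧ u = h * cw t m k with hP
    have hmemH : ∀ j, j < m → t j ∈ H := fun j hj =>
      Subgroup.subset_closure ⟨j, by simp [ht', hj]⟩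
    have key : ∀ g ∈ X, (∀ u, P u → P (u * g)) ∧ (∀ u, P u → P (u * g⁻¹)) := by
      intro g hg
      induction hg using Subgroup.closure_induction with
      | mem x hx =>
        obtain ⟨i, rfl⟩ := hx
        have main : ∀ u, P u → P (u * t i) := by
          rintro u ⟨k, hk, h, hh, rfl⟩
          by_cases hi : i ≤ m
          · obtain ⟨k', hk', h', hh', heq⟩ := stepLem h1 h2K h3K k i hk hi
            refine ⟨k', hk', h * h', ?_, by rw [mul_assoc, heq, ← mul_assoc]⟩
            rcases hh' with rfl | ⟨j, hj, rfl⟩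
            · simpa using hh
            · exact mul_mem hh (hmemH j hj)
          · rw [hjunk i (by omega), mul_one]
            exact ⟨k, hk, h, hh, rfl⟩
        have hinv : (t i)⁻¹ = t i := inv_eq_of_mul_eq_one_right (h1 i)
        exact ⟨main, by rw [hinv]; exact main⟩
      | one => exact ⟨fun u hu => by simpa using hu, fun u hu => by simpa using hu⟩
      | mul x y hx hy px py =>
        refine ⟨fun u hu => ?_, fun u hu => ?_⟩
        · rw [← mul_assoc]; exact py.1 _ (px.1 _ hu)
        · rw [mul_inv_rev, ← mul_assoc]; exact px.2 _ (py.2 _ hu)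
      | inv x hx px =>
        exact ⟨px.2, fun u hu => by rw [inv_inv]; exact px.1 _ hu⟩
    have cover : ∀ g ∈ X, P g := by
      intro g hg
      have h1P : P 1 := ⟨0, by omega, 1, one_mem H, by simp [cw]⟩
      have := (key g hg).1 1 h1P
      simpa using this
    haveI : Finite H := hfin
    set f : H × Fin (m + 2) → X :=
      fun p => ⟨p.1 * cw t m p.2.1, mul_mem (HleX p.1.2) (rmemX _)⟩ with hf
    have hfs : Function.Surjective f := by
      rintro ⟨x, hx⟩
      obtain ⟨k, hk, h, hh, rfl⟩ := cover x hx
      exact ⟨(⟨h, hh⟩, ⟨k, by omega⟩), rfl⟩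
    haveI : Finite X := Finite.of_surjective f hfs
    refine ⟨inferInstance, ?_⟩
    calc Nat.card X ≤ Nat.card (H × Fin (m + 2)) := Nat.card_le_card_of_surjective f hfs
      _ = Nat.card H * (m + 2) := by simp
      _ ≤ (m + 1).factorial * (m + 2) := Nat.mul_le_mul_right _ hcard
      _ = (m + 1 + 1).factorial := by rw [Nat.factorial_succ (m + 1)]; ring



noncomputable section Cliff

variable (n : ℕ)

/-- The negative-definite-ish quadratic form `x ↦ -(1/2)‖x‖²` on `ℝⁿ`. -/
def Qf : QuadraticForm ℝ (EuclideanSpace ℝ (Fin n)) :=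
  LinearMap.BilinMap.toQuadraticMap ((-(1/2) : ℝ) • innerₗ (EuclideanSpace ℝ (Fin n)))

variable {n}

theorem Qf_apply (x : EuclideanSpace ℝ (Fin n)) :
    Qf n x = -(1/2) * (inner ℝ x x : ℝ) := by
  simp [Qf, LinearMap.BilinMap.toQuadraticMap_apply, innerₗ_apply_apply]

theorem Qf_polar (x y : EuclideanSpace ℝ (Fin n)) :
    QuadraticMap.polar (Qf n) x y = -(inner ℝ x y : ℝ) := by
  rw [Qf, LinearMap.BilinMap.polar_toQuadraticMap]
  simp [innerₗ_apply_apply, real_inner_comm x y]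
  ring

variable (n) in
/-- basis-difference vectors -/
def vv (i : Fin (n - 1)) : EuclideanSpace ℝ (Fin n) :=
  EuclideanSpace.single ⟨i.1, by have := i.2; omega⟩ (1 : ℝ)
    - EuclideanSpace.single ⟨i.1 + 1, by have := i.2; omega⟩ (1 : ℝ)

theorem inner_single_single (a b : Fin n) :
    (inner ℝ (EuclideanSpace.single a (1:ℝ)) (EuclideanSpace.single b (1:ℝ)) : ℝ)
      = if a = b then 1 else 0 := by
  rw [EuclideanSpace.inner_single_left]
  simp [EuclideanSpace.single_apply, eq_comm]

theorem inner_vv (i j : Fin (n - 1)) :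
    (inner ℝ (vv n i) (vv n j) : ℝ) =
      ((if i.1 = j.1 then 1 else 0) - (if i.1 + 1 = j.1 then 1 else 0))
        - ((if i.1 = j.1 + 1 then 1 else 0) - (if i.1 + 1 = j.1 + 1 then 1 else 0)) := by
  simp only [vv, inner_sub_left, inner_sub_right, inner_single_single, Fin.mk_eq_mk]

theorem Qf_vv (i : Fin (n - 1)) : Qf n (vv n i) = -1 := by
  rw [Qf_apply, inner_vv]
  split_ifs <;> first | omega | norm_num

theorem polar_vv_succ {i j : Fin (n - 1)} (h : j.1 = i.1 + 1) :
    QuadraticMap.polar (Qf n) (vv n i) (vv n j) = 1 := by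
  rw [Qf_polar, inner_vv]
  split_ifs <;> first | omega | norm_num

theorem polar_vv_far {i j : Fin (n - 1)} (h : i.1 + 2 ≤ j.1 ∨ j.1 + 2 ≤ i.1) :
    QuadraticMap.polar (Qf n) (vv n i) (vv n j) = 0 := by
  rw [Qf_polar, inner_vv]
  split_ifs <;> first | omega | norm_num

/-- The unit `ι (vv i)` of the Clifford algebra. -/
def uu (i : Fin (n - 1)) : (CliffordAlgebra (Qf n))ˣ where
  val := CliffordAlgebra.ι (Qf n) (vv n i)
  inv := -CliffordAlgebra.ι (Qf n) (vv n i)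
  val_inv := by
    rw [mul_neg, CliffordAlgebra.ι_sq_scalar, Qf_vv]
    simp
  inv_val := by
    rw [neg_mul, CliffordAlgebra.ι_sq_scalar, Qf_vv]
    simp

theorem uu_sq (i : Fin (n - 1)) : uu i * uu i = -1 := by
  ext
  show CliffordAlgebra.ι (Qf n) (vv n i) * CliffordAlgebra.ι (Qf n) (vv n i) = _
  rw [CliffordAlgebra.ι_sq_scalar, Qf_vv]
  simp

theorem uu_comm {i j : Fin (n - 1)} (h : i.1 + 2 ≤ j.1 ∨ j.1 + 2 ≤ i.1) :
    uu i * uu j = -1 * (uu j * uu i) := by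
  ext
  show CliffordAlgebra.ι (Qf n) (vv n i) * CliffordAlgebra.ι (Qf n) (vv n j)
      = (-1 : CliffordAlgebra (Qf n)) * (CliffordAlgebra.ι (Qf n) (vv n j) * CliffordAlgebra.ι (Qf n) (vv n i))
  have := CliffordAlgebra.ι_mul_ι_add_swap (Q := Qf n) (vv n i) (vv n j)
  rw [polar_vv_far h, map_zero] at this
  rw [neg_one_mul]
  exact eq_neg_of_add_eq_zero_left this

theorem uu_braid {i j : Fin (n - 1)} (h : j.1 = i.1 + 1) :
    (uu i * uu j) ^ 3 = (-1 : (CliffordAlgebra (Qf n))ˣ) := by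
  ext
  set a := CliffordAlgebra.ι (Qf n) (vv n i) with ha'
  set b := CliffordAlgebra.ι (Qf n) (vv n j) with hb'
  have ha : a * a = -1 := by
    rw [ha', CliffordAlgebra.ι_sq_scalar, Qf_vv]; simp
  have hb : b * b = -1 := by
    rw [hb', CliffordAlgebra.ι_sq_scalar, Qf_vv]; simp
  have hab : a * b + b * a = 1 := by
    rw [ha', hb', CliffordAlgebra.ι_mul_ι_add_swap, polar_vv_succ h, map_one]
  have hba : b * a = 1 - a * b := eq_sub_of_add_eq' hab
  show (a * b) ^ 3 = (-1 : CliffordAlgebra (Qf n))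
  have h2 : (a * b) * (a * b) = a * b - 1 := by
    calc (a * b) * (a * b) = a * (b * a) * b := by noncomm_ring
      _ = a * (1 - a * b) * b := by rw [hba]
      _ = a * b - (a * a) * (b * b) := by noncomm_ring
      _ = a * b - 1 := by rw [ha, hb]; norm_num
  calc (a * b) ^ 3 = ((a * b) * (a * b)) * (a * b) := by rw [pow_succ, pow_two]
    _ = (a * b - 1) * (a * b) := by rw [h2]
    _ = ((a * b) * (a * b)) - a * b := by noncomm_ring
    _ = (a * b - 1) - a * b := by rw [h2]
    _ = -1 := by abel

theorem neg_one_ne_one_cliff : (-1 : CliffordAlgebra (Qf n)) ≠ 1 := by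
  intro h
  have h2 : (algebraMap ℝ (CliffordAlgebra (Qf n))) 2 = 0 := by
    have : (1 : CliffordAlgebra (Qf n)) + 1 = 0 := by
      nth_rewrite 1 [← h]; exact neg_add_cancel 1
    rw [map_ofNat]
    calc (2 : CliffordAlgebra (Qf n)) = 1 + 1 := by norm_num
      _ = 0 := this
  have h3 := congrArg (CliffordAlgebra.equivExterior (Qf n)) h2
  rw [map_zero] at h3
  rw [show (CliffordAlgebra.equivExterior (Qf n)) ((algebraMap ℝ _) 2)
      = algebraMap ℝ _ 2 from
    CliffordAlgebra.changeForm_algebraMap CliffordAlgebra.changeForm.associated_neg_proof 2] at h3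
  have := (ExteriorAlgebra.algebraMap_leftInverse (EuclideanSpace ℝ (Fin n))).injective
    (h3.trans (map_zero _).symm)
  norm_num at this

end Cliff



section PermLemmas

variable {β : Type*} [DecidableEq β]

theorem swap_conj_left {a b c : β} (hbc : b ≠ c) (hac : a ≠ c) :
    Equiv.swap a b * Equiv.swap b c * Equiv.swap a b = Equiv.swap a c := by
  have h := Equiv.swap_apply_apply (Equiv.swap a b) b c
  rw [Equiv.swap_apply_right, Equiv.swap_apply_of_ne_of_ne hac.symm hbc.symm] at h
  rw [h, Equiv.swap_inv, mul_assoc]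

theorem swap_conj_right {a b c : β} (hab : a ≠ b) (hac : a ≠ c) :
    Equiv.swap b c * Equiv.swap a b * Equiv.swap b c = Equiv.swap a c := by
  have h := Equiv.swap_apply_apply (Equiv.swap b c) a b
  rw [Equiv.swap_apply_left, Equiv.swap_apply_of_ne_of_ne hab hac] at h
  rw [h, Equiv.swap_inv]

theorem swap_braid {a b c : β} (hab : a ≠ b) (hbc : b ≠ c) (hac : a ≠ c) :
    (Equiv.swap a b * Equiv.swap b c) ^ 3 = 1 := by
  have h1 := swap_conj_left hbc hac
  have h2 := swap_conj_right hab hac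
  calc (Equiv.swap a b * Equiv.swap b c) ^ 3
      = (Equiv.swap a b * Equiv.swap b c * Equiv.swap a b)
        * (Equiv.swap b c * Equiv.swap a b * Equiv.swap b c) := by
        rw [pow_succ, pow_two]; simp [mul_assoc]
    _ = Equiv.swap a c * Equiv.swap a c := by rw [h1, h2]
    _ = 1 := Equiv.swap_mul_self a c

theorem swap_far_comm {a b c d : β} (hca : c ≠ a) (hcb : c ≠ b) (hda : d ≠ a) (hdb : d ≠ b) :
    Equiv.swap a b * Equiv.swap c d = Equiv.swap c d * Equiv.swap a b := by
  have h := Equiv.swap_apply_apply (Equiv.swap c d) a b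
  rw [Equiv.swap_apply_of_ne_of_ne hca.symm hda.symm,
    Equiv.swap_apply_of_ne_of_ne hcb.symm hdb.symm] at h
  have h2 := congrArg (· * Equiv.swap c d) h
  symm
  simpa [mul_assoc, Equiv.swap_inv, Equiv.swap_mul_self] using h2.symm

end PermLemmas


section GroupLemmas

theorem braid_of_cube {G : Type*} [Group G] {a b : G} (ha : a * a = 1) (hb : b * b = 1)
    (h : (a * b) ^ 3 = 1) : a * b * a = b * a * b := by
  have ha' : a⁻¹ = a := inv_eq_of_mul_eq_one_right ha
  have hb' : b⁻¹ = b := inv_eq_of_mul_eq_one_right hb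
  have h6 : (a * b * a) * (b * a * b) = 1 := by
    calc (a * b * a) * (b * a * b) = (a * b) * (a * b) * (a * b) := by simp [mul_assoc]
      _ = (a * b) ^ 3 := by rw [pow_succ, pow_two]
      _ = 1 := h
  have he := eq_inv_of_mul_eq_one_left h6
  rw [he, mul_inv_rev, mul_inv_rev, ha', hb', ← mul_assoc]

end GroupLemmas

section FinSwap

theorem fin_braid {N : ℕ} {i j : ℕ} (hij : j = i + 1) (pi : i < N) (pi1 : i + 1 < N)
    (pj : j < N) (pj1 : j + 1 < N) :
    (Equiv.swap (⟨i, pi⟩ : Fin N) ⟨i + 1, pi1⟩ * Equiv.swap (⟨j, pj⟩ : Fin N) ⟨j + 1, pj1⟩) ^ 3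
      = 1 := by
  have e1 : (⟨j, pj⟩ : Fin N) = ⟨i + 1, pi1⟩ := by simp only [Fin.mk.injEq]; omega
  rw [e1]
  exact swap_braid (by simp only [ne_eq, Fin.mk.injEq]; omega)
    (by simp only [ne_eq, Fin.mk.injEq]; omega) (by simp only [ne_eq, Fin.mk.injEq]; omega)

theorem fin_comm {N : ℕ} {i j : ℕ} (h : i + 2 ≤ j ∨ j + 2 ≤ i) (pi : i < N) (pi1 : i + 1 < N)
    (pj : j < N) (pj1 : j + 1 < N) :
    Equiv.swap (⟨i, pi⟩ : Fin N) ⟨i + 1, pi1⟩ * Equiv.swap (⟨j, pj⟩ : Fin N) ⟨j + 1, pj1⟩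
      = Equiv.swap (⟨j, pj⟩ : Fin N) ⟨j + 1, pj1⟩ * Equiv.swap (⟨i, pi⟩ : Fin N) ⟨i + 1, pi1⟩ :=
  swap_far_comm (by simp only [ne_eq, Fin.mk.injEq]; omega)
    (by simp only [ne_eq, Fin.mk.injEq]; omega) (by simp only [ne_eq, Fin.mk.injEq]; omega)
    (by simp only [ne_eq, Fin.mk.injEq]; omega)

end FinSwap

section Rels

variable {n : ℕ}

theorem memA : (FreeGroup.of (none : SchurGen n)) ^ 2 ∈ schurRels n :=
  Or.inl (Or.inl (Or.inl (Or.inl rfl)))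

theorem memB (i : Fin (n - 1)) :
    (FreeGroup.of (none : SchurGen n) * FreeGroup.of (some i))
      * (FreeGroup.of (some i) * FreeGroup.of (none : SchurGen n))⁻¹ ∈ schurRels n :=
  Or.inl (Or.inl (Or.inl (Or.inr ⟨i, rfl⟩)))

theorem memC (i : Fin (n - 1)) :
    FreeGroup.of (some i) ^ 2 * (FreeGroup.of (none : SchurGen n))⁻¹ ∈ schurRels n :=
  Or.inl (Or.inl (Or.inr ⟨i, rfl⟩))

theorem memD {i j : Fin (n - 1)} (h : (j : ℕ) = (i : ℕ) + 1) :
    (FreeGroup.of (some i) * FreeGroup.of (some j)) ^ 3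
      * (FreeGroup.of (none : SchurGen n))⁻¹ ∈ schurRels n :=
  Or.inl (Or.inr ⟨i, j, h, rfl⟩)

theorem memE {i j : Fin (n - 1)} (h : (i : ℕ) + 2 ≤ (j : ℕ) ∨ (j : ℕ) + 2 ≤ (i : ℕ)) :
    (FreeGroup.of (some i) * FreeGroup.of (some j))
      * (FreeGroup.of (none : SchurGen n) * FreeGroup.of (some j) * FreeGroup.of (some i))⁻¹
      ∈ schurRels n :=
  Or.inr ⟨i, j, h, rfl⟩

theorem lift_schur_rels {G : Type*} [Group G] {f : SchurGen n → G}
    (hz2 : f none * f none = 1)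
    (hzc : ∀ i, f none * f (some i) = f (some i) * f none)
    (ht2 : ∀ i, f (some i) * f (some i) = f none)
    (hbr : ∀ i j : Fin (n - 1), (j : ℕ) = (i : ℕ) + 1 →
      (f (some i) * f (some j)) ^ 3 = f none)
    (hcm : ∀ i j : Fin (n - 1), ((i : ℕ) + 2 ≤ (j : ℕ) ∨ (j : ℕ) + 2 ≤ (i : ℕ)) →
      f (some i) * f (some j) = f none * (f (some j) * f (some i))) :
    ∀ r ∈ schurRels n, FreeGroup.lift f r = 1 := by
  rintro r ((((h | ⟨i, rfl⟩) | ⟨i, rfl⟩) | ⟨i, j, hij, rfl⟩) | ⟨i, j, hij, rfl⟩)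
  · rw [Set.mem_singleton_iff] at h
    subst h
    rw [map_pow, FreeGroup.lift_apply_of, pow_two, hz2]
  · simp only [map_mul, map_inv, FreeGroup.lift_apply_of, mul_inv_eq_one]
    exact hzc i
  · simp only [map_mul, map_pow, map_inv, FreeGroup.lift_apply_of, mul_inv_eq_one]
    rw [pow_two]; exact ht2 i
  · simp only [map_mul, map_pow, map_inv, FreeGroup.lift_apply_of, mul_inv_eq_one]
    exact hbr i j hij
  · simp only [map_mul, map_inv, FreeGroup.lift_apply_of, mul_inv_eq_one]
    exact (hcm i j hij).trans (mul_assoc _ _ _).symm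

theorem relU (n : ℕ) : ∀ r ∈ schurRels n, PresentedGroup.mk (schurRels n) r = 1 := fun _ hr =>
  (QuotientGroup.eq_one_iff _).2 (Subgroup.subset_normalClosure hr)

theorem Uz2 (n : ℕ) :
    (PresentedGroup.of (rels := schurRels n) none) * PresentedGroup.of none = 1 := by
  have h := relU n _ (memA (n := n))
  rw [map_pow, pow_two] at h
  exact h

theorem Uzt (n : ℕ) (i : Fin (n - 1)) :
    (PresentedGroup.of (rels := schurRels n) none) * PresentedGroup.of (some i)
      = PresentedGroup.of (some i) * PresentedGroup.of none := by
  have h := relU n _ (memB i)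
  simp only [map_mul, map_inv, mul_inv_eq_one] at h
  exact h

theorem Ut2 (n : ℕ) (i : Fin (n - 1)) :
    (PresentedGroup.of (rels := schurRels n) (some i)) * PresentedGroup.of (some i)
      = PresentedGroup.of none := by
  have h := relU n _ (memC i)
  simp only [map_mul, map_pow, map_inv, mul_inv_eq_one] at h
  rw [← pow_two]
  exact h

theorem Ubraid (n : ℕ) {i j : Fin (n - 1)} (hij : (j : ℕ) = (i : ℕ) + 1) :
    ((PresentedGroup.of (rels := schurRels n) (some i)) * PresentedGroup.of (some j)) ^ 3
      = PresentedGroup.of none := by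
  have h := relU n _ (memD hij)
  simp only [map_mul, map_pow, map_inv, mul_inv_eq_one] at h
  exact h

theorem Ucomm (n : ℕ) {i j : Fin (n - 1)}
    (hij : (i : ℕ) + 2 ≤ (j : ℕ) ∨ (j : ℕ) + 2 ≤ (i : ℕ)) :
    (PresentedGroup.of (rels := schurRels n) (some i)) * PresentedGroup.of (some j)
      = PresentedGroup.of none
        * (PresentedGroup.of (some j) * PresentedGroup.of (some i)) := by
  have h := relU n _ (memE hij)
  simp only [map_mul, map_inv, mul_inv_eq_one] at h
  exact h.trans (mul_assoc _ _ _)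

theorem Ucenter (n : ℕ) :
    PresentedGroup.of (rels := schurRels n) none
      ∈ Subgroup.center (PresentedGroup (schurRels n)) := by
  rw [Subgroup.mem_center_iff]
  intro g
  have hg : g ∈ Subgroup.centralizer {PresentedGroup.of (rels := schurRels n) none} := by
    refine PresentedGroup.generated_by _ _ (fun j => ?_) g
    rw [Subgroup.mem_centralizer_iff]
    intro h hh
    rw [Set.mem_singleton_iff] at hh
    subst hh
    cases j with
    | none => rfl
    | some i => exact Uzt n i
  exact (Subgroup.mem_centralizer_iff.1 hg _ (Set.mem_singleton _)).symm

end Rels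


end SchurAux

open SchurAux
open scoped commutatorElement

/-- **Schur's presentation of the double cover of `Sₙ` is a stem extension** (Proposition 2.4).
For `n ≥ 4`, the group `U` presented by generators `z, t₁, ..., t_{n-1}` and Schur's relations
admits a surjection `π : U → Sₙ` with `π(z) = 1`, `π(tᵢ) = (i, i+1)`, and kernel `⟨z⟩`;
moreover `z` is central, `z² = 1`, `z ≠ 1` and `z ∈ [U, U]`, so `U` is a stem extension of `Sₙ`
with kernel of order `2`; in particular `|U| = 2·n!`. -/
theorem schur_cover_of_symmetricGroup (n : ℕ) (hn : 4 ≤ n) :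
    ∃ π : PresentedGroup (schurRels n) →* Equiv.Perm (Fin n),
      Function.Surjective π ∧
      π (PresentedGroup.of none) = 1 ∧
      (∀ i : Fin (n - 1),
        π (PresentedGroup.of (some i)) =
          Equiv.swap ⟨i.1, by have := i.2; omega⟩ ⟨i.1 + 1, by have := i.2; omega⟩) ∧
      π.ker = Subgroup.zpowers (PresentedGroup.of none) ∧
      (PresentedGroup.of (rels := schurRels n) none) ∈
        Subgroup.center (PresentedGroup (schurRels n)) ∧
      (PresentedGroup.of (rels := schurRels n) none) ^ 2 = 1 ∧
      (PresentedGroup.of (rels := schurRels n) none) ≠ 1 ∧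
      (PresentedGroup.of (rels := schurRels n) none) ∈
        commutator (PresentedGroup (schurRels n)) ∧
      Nat.card (PresentedGroup (schurRels n)) = 2 * n.factorial := by
  classical
  obtain ⟨m, rfl⟩ : ∃ m, n = m + 1 := ⟨n - 1, by omega⟩
  have hm : 3 ≤ m := by omega
  -- the homomorphism to the symmetric group
  have hPermRels : ∀ r ∈ schurRels (m + 1),
      FreeGroup.lift (fun x : SchurGen (m + 1) =>
        Option.elim x (1 : Equiv.Perm (Fin (m + 1)))
          (fun i => Equiv.swap ⟨i.1, by have := i.2; omega⟩
            ⟨i.1 + 1, by have := i.2; omega⟩)) r = 1 := by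
    apply lift_schur_rels
    · simp
    · intro i; simp
    · intro i
      simp only [Option.elim_some, Option.elim_none]
      exact Equiv.swap_mul_self _ _
    · intro i j hij
      simp only [Option.elim_some, Option.elim_none]
      exact fin_braid hij _ _ _ _
    · intro i j hij
      simp only [Option.elim_some, Option.elim_none]
      rw [one_mul]
      exact fin_comm hij _ _ _ _
  set π : PresentedGroup (schurRels (m + 1)) →* Equiv.Perm (Fin (m + 1)) :=
    PresentedGroup.toGroup hPermRels with hπ
  have hπz : π (PresentedGroup.of none) = 1 := PresentedGroup.toGroup.of hPermRels
  have hπt : ∀ i : Fin (m + 1 - 1),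
      π (PresentedGroup.of (some i)) =
        Equiv.swap ⟨i.1, by have := i.2; omega⟩ ⟨i.1 + 1, by have := i.2; omega⟩ :=
    fun i => PresentedGroup.toGroup.of hPermRels
  -- surjectivity
  have hsurj : Function.Surjective π := by
    rw [← MonoidHom.range_eq_top, eq_top_iff]
    intro g _
    have hg : g ∈ Submonoid.closure
        (Set.range fun i : Fin m => Equiv.swap i.castSucc i.succ) := by
      rw [Equiv.Perm.mclosure_swap_castSucc_succ]; trivial
    refine Submonoid.closure_le.2 ?_ hg
    rintro x ⟨i, rfl⟩
    refine ⟨PresentedGroup.of (some i), ?_⟩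
    rw [hπt i]
    congr 1
  -- the Clifford algebra homomorphism, giving z ≠ 1
  have hCliffRels : ∀ r ∈ schurRels (m + 1),
      FreeGroup.lift (fun x : SchurGen (m + 1) =>
        Option.elim x (-1 : (CliffordAlgebra (Qf (m + 1)))ˣ) uu) r = 1 := by
    apply lift_schur_rels
    · simp
    · intro i; simp
    · intro i
      simp only [Option.elim_some, Option.elim_none]
      exact uu_sq i
    · intro i j hij
      simp only [Option.elim_some, Option.elim_none]
      exact uu_braid hij
    · intro i j hij
      simp only [Option.elim_some, Option.elim_none]
      exact uu_comm hij
  have hzne : PresentedGroup.of (rels := schurRels (m + 1)) none ≠ 1 := by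
    intro h
    have h2 := congrArg (PresentedGroup.toGroup hCliffRels) h
    rw [map_one, PresentedGroup.toGroup.of] at h2
    have h3 := congrArg Units.val h2
    simp only [Option.elim_none, Units.val_neg, Units.val_one] at h3
    exact neg_one_ne_one_cliff (n := m + 1) h3
  -- basic relations
  have uz2 := Uz2 (m + 1)
  have hz2pow : (PresentedGroup.of (rels := schurRels (m + 1)) none) ^ 2 = 1 := by
    rw [pow_two]; exact uz2
  have hcen := Ucenter (m + 1)
  haveI hFact : Fact (Nat.Prime 2) := ⟨Nat.prime_two⟩
  have hord : orderOf (PresentedGroup.of (rels := schurRels (m + 1)) none) = 2 :=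
    orderOf_eq_prime hz2pow hzne
  -- commutator membership
  have hcommutator : PresentedGroup.of (rels := schurRels (m + 1)) none
      ∈ commutator (PresentedGroup (schurRels (m + 1))) := by
    have h02 := Ucomm (m + 1) (i := ⟨0, by omega⟩) (j := ⟨2, by omega⟩) (Or.inl (by norm_num))
    have hz : PresentedGroup.of (rels := schurRels (m + 1)) none
        = ⁅(PresentedGroup.of (rels := schurRels (m + 1)) (some ⟨0, by omega⟩)),
           (PresentedGroup.of (rels := schurRels (m + 1)) (some ⟨2, by omega⟩))⁆ := by
      rw [commutatorElement_def]
      have e : PresentedGroup.of (rels := schurRels (m + 1)) none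
          = (PresentedGroup.of (some ⟨0, by omega⟩) * PresentedGroup.of (some ⟨2, by omega⟩))
            * (PresentedGroup.of (some ⟨2, by omega⟩)
              * PresentedGroup.of (some ⟨0, by omega⟩))⁻¹ := by
        rw [h02]; group
      rw [e]; group
    rw [commutator_def]
    exact hz ▸ Subgroup.commutator_mem_commutator (Subgroup.mem_top _) (Subgroup.mem_top _)
  -- the central subgroup
  set ZP := Subgroup.zpowers (PresentedGroup.of (rels := schurRels (m + 1)) none) with hZP
  haveI hnormal : ZP.Normal := by
    constructor
    intro a ha g
    obtain ⟨k, rfl⟩ := Subgroup.mem_zpowers_iff.1 ha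
    have hc : Commute g (PresentedGroup.of (rels := schurRels (m + 1)) none) :=
      Subgroup.mem_center_iff.1 hcen g
    refine Subgroup.mem_zpowers_iff.2 ⟨k, ?_⟩
    rw [(hc.zpow_right k).eq]
    simp [mul_assoc]
  have hZPcard : Nat.card ZP = 2 := by rw [hZP, Nat.card_zpowers, hord]
  -- the quotient modulo the center is at most Sₙ
  set mk' := QuotientGroup.mk' ZP with hmk'
  have hmkZ : mk' (PresentedGroup.of (rels := schurRels (m + 1)) none) = 1 :=
    (QuotientGroup.eq_one_iff _).2 (Subgroup.mem_zpowers _)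
  set t' : ℕ → PresentedGroup (schurRels (m + 1)) ⧸ ZP := fun i =>
    if h : i < m then mk' (PresentedGroup.of (some (⟨i, by omega⟩ : Fin (m + 1 - 1)))) else 1
    with ht'
  have ht'one : ∀ i, t' i * t' i = 1 := by
    intro i
    by_cases h : i < m
    · simp only [ht', dif_pos h]
      rw [← map_mul, Ut2, hmkZ]
    · simp [ht', dif_neg h]
  obtain ⟨hfinT, hcardT⟩ := coxBound m t'
    (fun i hi => by simp [ht', dif_neg (by omega : ¬ i < m)])
    ht'one
    (fun i hi => by
      simp only [ht', dif_pos (show i < m by omega), dif_pos (show i + 1 < m by omega)]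
      refine braid_of_cube ?_ ?_ ?_
      · rw [← map_mul, Ut2, hmkZ]
      · rw [← map_mul, Ut2, hmkZ]
      · rw [← map_mul, ← map_pow, Ubraid (m + 1) (by simp), hmkZ])
    (fun i j hij hjm => by
      simp only [ht', dif_pos (show i < m by omega), dif_pos (show j < m by omega)]
      rw [← map_mul, Ucomm (m + 1) (i := ⟨i, by omega⟩) (j := ⟨j, by omega⟩) (Or.inl (by simpa)),
        map_mul, map_mul, hmkZ, one_mul])
  have htop : Subgroup.closure (Set.range t') = ⊤ := by
    rw [eq_top_iff]
    rintro g -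
    obtain ⟨u, rfl⟩ := QuotientGroup.mk'_surjective ZP g
    refine PresentedGroup.generated_by _ ((Subgroup.closure (Set.range t')).comap mk')
      (fun j => ?_) u
    rw [Subgroup.mem_comap]
    cases j with
    | none => rw [hmkZ]; exact one_mem _
    | some i =>
      have : t' i.1 = mk' (PresentedGroup.of (some i)) := by
        have hlt : (i : ℕ) < m := by have := i.2; omega
        simp only [ht']
        rw [dif_pos hlt]
      exact this ▸ Subgroup.subset_closure ⟨i.1, rfl⟩
  rw [htop] at hfinT hcardT
  rw [Subgroup.card_top] at hcardT
  haveI : Finite (PresentedGroup (schurRels (m + 1)) ⧸ ZP) :=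
    Finite.of_equiv _ Subgroup.topEquiv.toEquiv
  haveI : Finite ZP := by
    apply Nat.finite_of_card_ne_zero
    rw [hZPcard]; omega
  haveI : Finite (PresentedGroup (schurRels (m + 1))) :=
    Finite.of_subgroup_quotient ZP
  -- cardinality bookkeeping
  have hUcard : Nat.card (PresentedGroup (schurRels (m + 1)))
      = Nat.card (PresentedGroup (schurRels (m + 1)) ⧸ ZP) * Nat.card ZP :=
    Subgroup.card_eq_card_quotient_mul_card_subgroup ZP
  have hUle : Nat.card (PresentedGroup (schurRels (m + 1))) ≤ (m + 1).factorial * 2 := by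
    rw [hUcard, hZPcard]
    exact Nat.mul_le_mul_right 2 hcardT
  have hkq : Nat.card (PresentedGroup (schurRels (m + 1)) ⧸ π.ker) = (m + 1).factorial := by
    rw [Nat.card_congr (QuotientGroup.quotientKerEquivOfSurjective π hsurj).toEquiv]
    simp [Nat.card_eq_fintype_card, Fintype.card_perm, Fintype.card_fin]
  have hUK : Nat.card (PresentedGroup (schurRels (m + 1)))
      = (m + 1).factorial * Nat.card π.ker := by
    rw [Subgroup.card_eq_card_quotient_mul_card_subgroup π.ker, hkq]
  have hKle : Nat.card π.ker ≤ 2 := by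
    have hpos : 0 < (m + 1).factorial := Nat.factorial_pos _
    have := hUK ▸ hUle
    exact Nat.le_of_mul_le_mul_left this hpos
  have hZleK : ZP ≤ π.ker := Subgroup.zpowers_le.2 (by rw [MonoidHom.mem_ker]; exact hπz)
  have hker : π.ker = ZP :=
    (Subgroup.eq_of_le_of_card_ge hZleK (by rw [hZPcard]; exact hKle)).symm
  have hKcard : Nat.card π.ker = 2 := by rw [hker, hZPcard]
  have hfinal : Nat.card (PresentedGroup (schurRels (m + 1))) = 2 * (m + 1).factorial := by
    rw [hUK, hKcard, Nat.mul_comm]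
  exact ⟨π, hsurj, hπz, hπt, hker, hcen, hz2pow, hzne, hcommutator, hfinal⟩
end

section
/- Let n ≥ 4 and let U be the group with generators z, t_1, …, t_{n−1} and the Schur relations. Setting e_i = t_1 t_{i+1} for 1 ≤ i ≤ n−2, the identity z = [e_1^{−1} e_2 e_1, e_2] holds in U. -/
theorem schur_word {G : Type*} [Group G] (z u v w : G)
    (hzz : z * z = 1)
    (hzu : u * z = z * u) (hzv : v * z = z * v) (hzw : w * z = z * w)
    (hu : u * u = z) (hv : v * v = z) (hw : w * w = z)
    (buv : u * (v * (u * (v * (u * v)))) = z)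
    (bvw : v * (w * (v * (w * (v * w)))) = z)
    (cuw : u * w = z * (w * u)) :
    z = @Bracket.bracket G G commutatorElement ((u*v)⁻¹ * (u*w) * (u*v)) (u*w) := by
  have z2 : ∀ x : G, z * (z * x) = x := fun x => by rw [← mul_assoc, hzz, one_mul]
  have pu : ∀ x : G, u * (z * x) = z * (u * x) := fun x => by rw [← mul_assoc, hzu, mul_assoc]
  have pv : ∀ x : G, v * (z * x) = z * (v * x) := fun x => by rw [← mul_assoc, hzv, mul_assoc]
  have pw : ∀ x : G, w * (z * x) = z * (w * x) := fun x => by rw [← mul_assoc, hzw, mul_assoc]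
  have su : ∀ x : G, u * (u * x) = z * x := fun x => by rw [← mul_assoc, hu]
  have sv : ∀ x : G, v * (v * x) = z * x := fun x => by rw [← mul_assoc, hv]
  have sw : ∀ x : G, w * (w * x) = z * x := fun x => by rw [← mul_assoc, hw]
  have iu : u⁻¹ = z * u := by apply inv_eq_of_mul_eq_one_right; rw [pu, hu, hzz]
  have iv : v⁻¹ = z * v := by apply inv_eq_of_mul_eq_one_right; rw [pv, hv, hzz]
  have iw : w⁻¹ = z * w := by apply inv_eq_of_mul_eq_one_right; rw [pw, hw, hzz]
  have iz : z⁻¹ = z := inv_eq_of_mul_eq_one_right hzz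
  have cwu : ∀ x : G, w * (u * x) = z * (u * (w * x)) := fun x => by
    have : w * u = z * (u * w) := by
      have := congrArg (fun y => z * y) cuw
      simpa only [z2, ← mul_assoc, hzz, one_mul] using this.symm
    rw [← mul_assoc, this, mul_assoc, mul_assoc]
  have cuw' : ∀ x : G, u * (w * x) = z * (w * (u * x)) := fun x => by
    rw [← mul_assoc, cuw, mul_assoc, mul_assoc]
  -- braid relations in usable form
  have huvu : u * (v * u) = v * (u * v) := by
    have A : (u * (v * u)) * (v * (u * v)) = z := by
      simpa only [mul_assoc] using buv
    have B : (v * (u * v)) * (v * (u * v)) = z := by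
      simp only [mul_assoc, sv, pu, su, z2, hv]
    exact mul_right_cancel (A.trans B.symm)
  have hvwv : v * (w * v) = w * (v * w) := by
    have A : (v * (w * v)) * (w * (v * w)) = z := by
      simpa only [mul_assoc] using bvw
    have B : (w * (v * w)) * (w * (v * w)) = z := by
      simp only [mul_assoc, sw, pv, sv, z2, hw]
    exact mul_right_cancel (A.trans B.symm)
  have huvu' : u * v * u = v * u * v := by simpa only [mul_assoc] using huvu
  have buvu : ∀ x : G, u * (v * (u * x)) = v * (u * (v * x)) := fun x => by
    simp only [← mul_assoc]; rw [huvu']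
  have hvwv' : v * w * v = w * v * w := by simpa only [mul_assoc] using hvwv
  have bvwv : ∀ x : G, v * (w * (v * x)) = w * (v * (w * x)) := fun x => by
    simp only [← mul_assoc]; rw [hvwv']
  symm
  simp only [commutatorElement_def, mul_inv_rev, inv_inv, iu, iv, iw, iz, mul_assoc]
  simp only [pu, pv, pw, su, sv, sw, cuw', z2, hzz, hu, hv, hw, cuw, iz, mul_one, one_mul]
  rw [cwu]
  try simp only [pu, pv, pw, su, sv, sw, z2, hzz, hu, hv, hw, mul_one, one_mul]
  rw [← bvwv]
  try simp only [pu, pv, pw, su, sv, sw, z2, hzz, hu, hv, hw, mul_one, one_mul]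
  rw [cwu]
  try simp only [pu, pv, pw, su, sv, sw, z2, hzz, hu, hv, hw, mul_one, one_mul]
  rw [buvu]
  try simp only [pu, pv, pw, su, sv, sw, z2, hzz, hu, hv, hw, mul_one, one_mul]
  rw [cwu]
  try simp only [pu, pv, pw, su, sv, sw, z2, hzz, hu, hv, hw, mul_one, one_mul]
  rw [buvu]
  try simp only [pu, pv, pw, su, sv, sw, z2, hzz, hu, hv, hw, mul_one, one_mul]
  rw [bvwv]
  try simp only [pu, pv, pw, su, sv, sw, z2, hzz, hu, hv, hw, mul_one, one_mul]




/-- **The key commutator identity in the Schur cover** (claim in Lemma 2.5).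
For `n ≥ 4`, in the group `U` presented by generators `z, t₁, ..., t_{n-1}` and Schur's
relations, setting `eᵢ = t₁ t_{i+1}` for `1 ≤ i ≤ n-2` (below `e ⟨a, _⟩` is `e_{a+1}`),
we have `z = [e₁⁻¹ e₂ e₁, e₂]`, where `[a, b] = a b a⁻¹ b⁻¹`. -/
theorem schur_central_elt_eq_commutator (n : ℕ) (hn : 4 ≤ n) :
    let U := PresentedGroup (schurRels n)
    let z : U := PresentedGroup.of none
    let e : Fin (n - 2) → U := fun a =>
      PresentedGroup.of (some ⟨0, by have := a.2; omega⟩) *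
        PresentedGroup.of (some ⟨a.1 + 1, by have := a.2; omega⟩)
    z = @Bracket.bracket U U commutatorElement ((e ⟨0, by omega⟩)⁻¹ * e ⟨1, by omega⟩ * e ⟨0, by omega⟩) (e ⟨1, by omega⟩) := by
  intro U z e
  have key : ∀ r ∈ schurRels n, PresentedGroup.mk (schurRels n) r = 1 := fun r hr =>
    (QuotientGroup.eq_one_iff r).2 (Subgroup.subset_normalClosure hr)
  have ofmk : ∀ x : SchurGen n, PresentedGroup.mk (schurRels n) (FreeGroup.of x) = PresentedGroup.of x := fun _ => rfl
  have h1 : 0 < n - 1 := by omega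
  have h2 : 1 < n - 1 := by omega
  have h3 : 2 < n - 1 := by omega
  set i0 : Fin (n-1) := ⟨0, h1⟩
  set i1 : Fin (n-1) := ⟨1, h2⟩
  set i2 : Fin (n-1) := ⟨2, h3⟩
  set u : U := PresentedGroup.of (some i0) with hu_def
  set v : U := PresentedGroup.of (some i1) with hv_def
  set w : U := PresentedGroup.of (some i2) with hw_def
  -- relation: z² = 1
  have hzz : z * z = 1 := by
    have := key (FreeGroup.of (none : SchurGen n) ^ 2)
      (by simp only [schurRels, Set.mem_union, Set.mem_singleton_iff, Set.mem_setOf_eq]; tauto)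
    simpa [pow_two, map_mul, ofmk] using this
  -- relation: z central
  have hzc : ∀ i : Fin (n-1), PresentedGroup.of (some i) * z = z * PresentedGroup.of (some i) := by
    intro i
    have := key ((FreeGroup.of (none : SchurGen n) * FreeGroup.of (some i)) *
        (FreeGroup.of (some i) * FreeGroup.of (none : SchurGen n))⁻¹)
      (by simp only [schurRels, Set.mem_union, Set.mem_singleton_iff, Set.mem_setOf_eq]
          exact Or.inl (Or.inl (Or.inl (Or.inr ⟨i, rfl⟩))))
    simp only [map_mul, map_inv, map_pow, ofmk] at this
    have := mul_eq_one_iff_eq_inv.mp this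
    rw [inv_inv] at this
    exact this.symm
  -- relation: tᵢ² = z
  have hsq : ∀ i : Fin (n-1),
      PresentedGroup.of (some i) * PresentedGroup.of (some i) = z := by
    intro i
    have := key (FreeGroup.of (some i) ^ 2 * (FreeGroup.of (none : SchurGen n))⁻¹)
      (by simp only [schurRels, Set.mem_union, Set.mem_singleton_iff, Set.mem_setOf_eq]
          exact Or.inl (Or.inl (Or.inr ⟨i, rfl⟩)))
    simp only [map_mul, map_inv, map_pow, ofmk] at this
    have := mul_eq_one_iff_eq_inv.mp this
    rw [inv_inv, pow_two] at this
    exact this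
  -- relation: braid
  have hbr : ∀ i j : Fin (n-1), (j : ℕ) = (i : ℕ) + 1 →
      (PresentedGroup.of (some i) * PresentedGroup.of (some j)) ^ 3 = z := by
    intro i j hij
    have := key ((FreeGroup.of (some i) * FreeGroup.of (some j)) ^ 3 *
        (FreeGroup.of (none : SchurGen n))⁻¹)
      (by simp only [schurRels, Set.mem_union, Set.mem_singleton_iff, Set.mem_setOf_eq]
          exact Or.inl (Or.inr ⟨i, j, hij, rfl⟩))
    simp only [map_mul, map_inv, map_pow, ofmk] at this
    have := mul_eq_one_iff_eq_inv.mp this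
    rwa [inv_inv] at this
  -- relation: disjoint commutation
  have hdis : ∀ i j : Fin (n-1), (i : ℕ) + 2 ≤ (j : ℕ) →
      PresentedGroup.of (some i) * PresentedGroup.of (some j) =
        z * (PresentedGroup.of (some j) * PresentedGroup.of (some i)) := by
    intro i j hij
    have := key ((FreeGroup.of (some i) * FreeGroup.of (some j)) *
        ((FreeGroup.of (none : SchurGen n)) * FreeGroup.of (some j) * FreeGroup.of (some i))⁻¹)
      (by simp only [schurRels, Set.mem_union, Set.mem_singleton_iff, Set.mem_setOf_eq]
          exact Or.inr ⟨i, j, Or.inl hij, rfl⟩)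
    simp only [map_mul, map_inv, map_pow, ofmk] at this
    have := mul_eq_one_iff_eq_inv.mp this
    rw [inv_inv, mul_assoc] at this
    exact this
  have braid_uv := hbr i0 i1 rfl
  have braid_vw := hbr i1 i2 rfl
  have comm_uw := hdis i0 i2 (by simp [i0, i2])
  have goal_eq : e ⟨0, by omega⟩ = u * v := rfl
  have goal_eq2 : e ⟨1, by omega⟩ = u * w := rfl
  rw [goal_eq, goal_eq2]
  exact schur_word z u v w hzz (hzc i0) (hzc i1) (hzc i2) (hsq i0) (hsq i1) (hsq i2)
    (by simpa only [pow_succ, pow_zero, one_mul, mul_assoc] using braid_uv)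
    (by simpa only [pow_succ, pow_zero, one_mul, mul_assoc] using braid_vw)
    comm_uw
end

section
/- Let n ≥ 8, let U be the group with generators z, t_1, …, t_{n−1} and the Schur relations, and let π : U → S_n be the surjection with π(z) = 1 and π(t_i) = (i, i+1). Then V := π^{−1}(A_n) is a stem extension of A_n with kernel ⟨z⟩ of order 2: that is, ⟨z⟩ ⊆ Z(V) ∩ [V,V] and V/⟨z⟩ ≅ A_n (in particular |V| = n!). -/
namespace SchurCover

variable {G : Type*} [Group G]

def desc (t : ℕ → G) (a : ℕ) : ℕ → G
  | 0 => 1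
  | (k+1) => desc t a k * t (a - k)

@[simp] lemma desc_zero (t : ℕ → G) (a : ℕ) : desc t a 0 = 1 := rfl

lemma desc_succ (t : ℕ → G) (a k : ℕ) : desc t a (k+1) = desc t a k * t (a - k) := rfl

lemma desc_add (t : ℕ → G) (a m r : ℕ) :
    desc t a (m + r) = desc t a m * desc t (a - m) r := by
  induction r with
  | zero => simp
  | succ r ih =>
      rw [← Nat.add_assoc, desc_succ, ih, desc_succ, mul_assoc, Nat.sub_sub]

lemma z_desc_comm (z : G) (t : ℕ → G) (hzc : ∀ i, z * t i = t i * z) (a k : ℕ) :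
    z * desc t a k = desc t a k * z := by
  induction k with
  | zero => simp
  | succ k ih => rw [desc_succ, ← mul_assoc, ih, mul_assoc, hzc, mul_assoc]

lemma desc_mul_t (z : G) (t : ℕ → G) (hzc : ∀ i, z * t i = t i * z) {a k i : ℕ}
    (h : ∀ m < k, t (a - m) * t i = z * (t i * t (a - m))) :
    desc t a k * t i = z ^ k * (t i * desc t a k) := by
  induction k with
  | zero => simp
  | succ k ih =>
      rw [desc_succ, mul_assoc, h k (Nat.lt_succ_self k), ← mul_assoc, ← mul_assoc,
        ← z_desc_comm z t hzc, mul_assoc z, ih (fun m hm => h m (hm.trans (Nat.lt_succ_self k))),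
        pow_succ]
      group

lemma flip (z : G) (hz2 : z * z = 1) {a b : G} (h : a * b = z * (b * a)) :
    b * a = z * (a * b) := by
  rw [h, ← mul_assoc, hz2, one_mul]

lemma cover (N : ℕ) (z : G) (t : ℕ → G)
    (hz2 : z * z = 1)
    (hzc : ∀ i, z * t i = t i * z)
    (hsq : ∀ i < N, t i * t i = z)
    (hbr : ∀ i, i + 1 < N → t i * t (i+1) * t i = t (i+1) * t i * t (i+1))
    (hfar : ∀ i j, i + 2 ≤ j → j < N → t i * t j = z * (t j * t i)) :
    ∀ M, M ≤ N → ∃ T : Finset G,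
      ((Subgroup.closure ({z} ∪ t '' Set.Iio M) : Subgroup G) : Set G) ⊆ ↑T ∧
      T.card ≤ 2 * Nat.factorial (M + 1) := by
  classical
  intro M
  induction M with
  | zero =>
      intro _
      refine ⟨{1, z}, ?_, ?_⟩
      · intro g hg
        have hio : (Set.Iio 0 : Set ℕ) = ∅ := by ext x; simp
        have hset : ({z} ∪ t '' Set.Iio 0 : Set G) = {z} := by
          rw [hio]; simp
        rw [hset] at hg
        have : g = 1 ∨ g = z := by
          refine Subgroup.closure_induction ?_ (Or.inl rfl) ?_ ?_ hg
          · rintro x rfl; exact Or.inr rfl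
          · rintro x y _ _ (rfl | rfl) (rfl | rfl) <;> simp [hz2]
          · rintro x _ (rfl | rfl)
            · simp
            · exact Or.inr (inv_eq_of_mul_eq_one_left hz2)
        rcases this with rfl | rfl <;> simp
      · calc ({1, z} : Finset G).card ≤ ({z} : Finset G).card + 1 := Finset.card_insert_le _ _
          _ ≤ 2 := by simp
  | succ M ih =>
      intro hMN
      obtain ⟨T, hT, hTcard⟩ := ih (Nat.le_of_succ_le hMN)
      set K := Subgroup.closure ({z} ∪ t '' Set.Iio M) with hK
      set X : Set G := {g | ∃ k ≤ M + 1, ∃ x ∈ K, g = x * desc t M k} with hX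
      have hzK : z ∈ K := Subgroup.subset_closure (Or.inl rfl)
      have htK : ∀ i, i < M → t i ∈ K := fun i hi => Subgroup.subset_closure (Or.inr ⟨i, hi, rfl⟩)
      have Czt : ∀ x, Commute z (t x) := hzc
      have Czd : ∀ a b, Commute z (desc t a b) := fun a b => z_desc_comm z t hzc a b
      have hXz : ∀ y ∈ X, y * z ∈ X := by
        rintro y ⟨k, hk, x, hx, rfl⟩
        exact ⟨k, hk, x * z, K.mul_mem hx hzK,
          by rw [mul_assoc, ← z_desc_comm z t hzc, ← mul_assoc]⟩
      have hXt : ∀ i, i < M + 1 → ∀ y ∈ X, y * t i ∈ X := by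
        rintro i hi y ⟨k, hk, x, hx, rfl⟩
        rcases lt_trichotomy (i + k) M with hik | hik | hik
        · -- case C : commuting past the whole block
          have hcomm : desc t M k * t i = z ^ k * (t i * desc t M k) := by
            refine desc_mul_t z t hzc ?_
            intro m hm
            exact flip z hz2 (hfar i (M - m) (by omega) (by omega))
          refine ⟨k, hk, x * (z ^ k * t i),
            K.mul_mem hx (K.mul_mem (K.pow_mem hzK k) (htK i (by omega))), ?_⟩
          rw [mul_assoc, hcomm]
          group
        · -- case A : extend the block
          refine ⟨k + 1, by omega, x, hx, ?_⟩
          have hck : desc t M (k+1) = desc t M k * t i := by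
            rw [desc_succ]
            congr 2
            omega
          rw [hck, ← mul_assoc]
        · -- i + k > M
          rcases Nat.lt_or_ge (M + 1) (i + k) with hik2 | hik2
          · -- case D : braid move
            obtain ⟨j, rfl⟩ : ∃ j, i = j + 1 := ⟨i - 1, by omega⟩
            obtain ⟨p, hp⟩ : ∃ p, M = j + 1 + p := ⟨M - (j+1), by omega⟩
            obtain ⟨q, hq⟩ : ∃ q, k = p + (2 + q) := ⟨k - p - 2, by omega⟩
            have d1 : ∀ a, desc t a 1 = t a := fun a => by
              rw [desc_succ]; simp
            have hdecomp : desc t M k = desc t M p * (t (j+1) * (t j * desc t (j-1) q)) := by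
              rw [hq, desc_add, show M - p = j + 1 from by omega,
                show (2:ℕ) + q = 1 + (1 + q) from by omega, desc_add, d1,
                show j + 1 - 1 = j from by omega, desc_add, d1]
            have hL1D2 : desc t (j-1) q * t (j + 1) = z ^ q * (t (j + 1) * desc t (j-1) q) :=
              desc_mul_t z t hzc (fun m hm => hfar ((j-1) - m) (j + 1) (by omega) (by omega))
            have hL1D1 : desc t M p * t j = z ^ p * (t j * desc t M p) :=
              desc_mul_t z t hzc (fun m hm => flip z hz2 (hfar j (M - m) (by omega) (by omega)))
            have hbrj : t (j+1) * t j * t (j+1) = t j * t (j+1) * t j := (hbr j (by omega)).symm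
            have C1 : Commute (z ^ q) (desc t M p * (t (j+1) * t j)) :=
              ((Czd _ _).mul_right ((Czt _).mul_right (Czt _))).pow_left q
            have hmain : desc t M k * t (j + 1)
                = z ^ q * (z ^ p * (t j * desc t M k)) := by
              calc desc t M k * t (j + 1)
                  = desc t M p * (t (j+1) * t j) * (desc t (j-1) q * t (j+1)) := by
                    rw [hdecomp]; group
                _ = desc t M p * (t (j+1) * t j) * (z ^ q * (t (j+1) * desc t (j-1) q)) := by
                    rw [hL1D2]
                _ = z ^ q * (desc t M p * (t (j+1) * t j * t (j+1)) * desc t (j-1) q) := by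
                    rw [← mul_assoc, ← C1.eq]; group
                _ = z ^ q * ((desc t M p * t j) * ((t (j+1) * t j) * desc t (j-1) q)) := by
                    rw [hbrj]; group
                _ = z ^ q * ((z ^ p * (t j * desc t M p)) * ((t (j+1) * t j) * desc t (j-1) q)) := by
                    rw [hL1D1]
                _ = z ^ q * (z ^ p * (t j * (desc t M p * (t (j+1) * (t j * desc t (j-1) q))))) := by
                    group
                _ = z ^ q * (z ^ p * (t j * desc t M k)) := by rw [← hdecomp]
            refine ⟨k, hk, x * (z ^ q * (z ^ p * t j)),
              K.mul_mem hx (K.mul_mem (K.pow_mem hzK q)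
                (K.mul_mem (K.pow_mem hzK p) (htK j (by omega)))), ?_⟩
            rw [mul_assoc, hmain]
            group
          · -- case B : i + k = M + 1, shrink the block
            have hik1 : i + k = M + 1 := by omega
            obtain ⟨k', rfl⟩ : ∃ k', k = k' + 1 := ⟨k - 1, by omega⟩
            have hck : desc t M (k' + 1) = desc t M k' * t i := by
              rw [desc_succ]
              congr 2
              omega
            refine ⟨k', by omega, x * z, K.mul_mem hx hzK, ?_⟩
            rw [hck, mul_assoc, mul_assoc, hsq i (by omega), mul_assoc,
              ← z_desc_comm z t hzc, ← mul_assoc]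
      -- inverses
      have hzinv : z⁻¹ = z := inv_eq_of_mul_eq_one_left hz2
      have htinv : ∀ i, i < M + 1 → (t i)⁻¹ = t i * z := by
        intro i hi
        refine inv_eq_of_mul_eq_one_right ?_
        rw [← mul_assoc, hsq i (by omega), hz2]
      have key : ∀ g ∈ Subgroup.closure ({z} ∪ t '' Set.Iio (M+1)), ∀ y ∈ X, y * g ∈ X := by
        intro g hg
        have hg' : g ∈ Submonoid.closure
            (({z} ∪ t '' Set.Iio (M+1)) ∪ ({z} ∪ t '' Set.Iio (M+1))⁻¹) := by
          rw [← Subgroup.closure_toSubmonoid]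
          exact hg
        refine Submonoid.closure_induction ?_ (by simp) ?_ hg'
        · rintro s (hs | hs)
          · rcases hs with rfl | ⟨i, hi, rfl⟩
            · exact hXz
            · exact hXt i hi
          · rw [Set.mem_inv] at hs
            rcases hs with h | ⟨i, hi, h⟩
            · have hsz : s = z := by
                rw [← inv_inv s, Set.mem_singleton_iff.mp h, hzinv]
              rw [hsz]
              exact hXz
            · have hs2 : s = t i * z := by
                rw [← htinv i hi, h, inv_inv]
              intro y hy
              rw [hs2, ← mul_assoc]
              exact hXz _ (hXt i hi y hy)
        · intro a b _ _ ha hb y hy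
          rw [← mul_assoc]
          exact hb _ (ha y hy)
      have hXsub : ((Subgroup.closure ({z} ∪ t '' Set.Iio (M+1)) : Subgroup G) : Set G) ⊆ X := by
        intro g hg
        have h1 : (1 : G) ∈ X := ⟨0, by omega, 1, K.one_mem, by simp⟩
        simpa using key g hg 1 h1
      refine ⟨(Finset.range (M+2)).biUnion (fun k => T.image (fun x => x * desc t M k)), ?_, ?_⟩
      · intro g hg
        obtain ⟨k, hk, x, hx, rfl⟩ := hXsub hg
        refine Finset.mem_coe.mpr (Finset.mem_biUnion.mpr ⟨k, Finset.mem_range.mpr (by omega), ?_⟩)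
        exact Finset.mem_image.mpr ⟨x, hT hx, rfl⟩
      · calc ((Finset.range (M+2)).biUnion (fun k => T.image (fun x => x * desc t M k))).card
            ≤ ∑ k ∈ Finset.range (M+2), (T.image (fun x => x * desc t M k)).card :=
              Finset.card_biUnion_le
          _ ≤ ∑ _k ∈ Finset.range (M+2), T.card :=
              Finset.sum_le_sum (fun k _ => Finset.card_image_le)
          _ = (M+2) * T.card := by simp [Finset.sum_const, mul_comm]
          _ ≤ (M+2) * (2 * Nat.factorial (M+1)) := Nat.mul_le_mul_left _ hTcard
          _ = 2 * ((M+2) * Nat.factorial (M+1)) := by ring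
          _ = 2 * Nat.factorial (M+2) := by rw [← Nat.factorial_succ]

end SchurCover

namespace SchurCliff

noncomputable section

open CliffordAlgebra

variable {N : ℕ}

abbrev Q (N : ℕ) : QuadraticForm ℝ (Fin N → ℝ) :=
  QuadraticMap.weightedSumSquares ℝ (fun _ : Fin N => (-1 : ℝ))

abbrev e (a : Fin N) : Fin N → ℝ := Pi.single a 1

lemma Q_pair (a b : Fin N) (h : a ≠ b) : Q N (e a - e b) = -2 := by
  rw [QuadraticMap.weightedSumSquares_apply]
  have key : ∀ j : Fin N, (-1:ℝ) • ((e a - e b) j * (e a - e b) j)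
      = (if j = a then (-1:ℝ) else 0) + (if j = b then (-1:ℝ) else 0) := by
    intro j
    simp only [e, Pi.sub_apply, Pi.single_apply, smul_eq_mul]
    by_cases hja : j = a <;> by_cases hjb : j = b <;> simp [hja, hjb] <;> simp_all
  rw [Finset.sum_congr rfl (fun j _ => key j), Finset.sum_add_distrib,
    Finset.sum_ite_eq', Finset.sum_ite_eq']
  simp
  norm_num

lemma Q_quad (a b c d : Fin N) (hab : a ≠ b) (hac : a ≠ c) (had : a ≠ d)
    (hbc : b ≠ c) (hbd : b ≠ d) (hcd : c ≠ d) :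
    Q N (e a - e b + (e c - e d)) = -4 := by
  rw [QuadraticMap.weightedSumSquares_apply]
  have key : ∀ j : Fin N, (-1:ℝ) • ((e a - e b + (e c - e d)) j * (e a - e b + (e c - e d)) j)
      = ((if j = a then (-1:ℝ) else 0) + (if j = b then (-1:ℝ) else 0))
        + ((if j = c then (-1:ℝ) else 0) + (if j = d then (-1:ℝ) else 0)) := by
    intro j
    simp only [e, Pi.add_apply, Pi.sub_apply, Pi.single_apply, smul_eq_mul]
    by_cases hja : j = a <;> by_cases hjb : j = b <;> by_cases hjc : j = c <;>
      by_cases hjd : j = d <;> simp [hja, hjb, hjc, hjd] <;> simp_all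
  rw [Finset.sum_congr rfl (fun j _ => key j), Finset.sum_add_distrib, Finset.sum_add_distrib,
    Finset.sum_add_distrib, Finset.sum_ite_eq', Finset.sum_ite_eq', Finset.sum_ite_eq',
    Finset.sum_ite_eq']
  simp
  norm_num

lemma polar_pair_quad (a b c d : Fin N) (hab : a ≠ b) (hac : a ≠ c) (had : a ≠ d)
    (hbc : b ≠ c) (hbd : b ≠ d) (hcd : c ≠ d) :
    QuadraticMap.polar (⇑(Q N)) (e a - e b) (e c - e d) = 0 := by
  rw [QuadraticMap.polar, Q_quad a b c d hab hac had hbc hbd hcd,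
    Q_pair a b hab, Q_pair c d hcd]
  norm_num

lemma polar_pair_adj (a b c : Fin N) (hab : a ≠ b) (hac : a ≠ c) (hbc : b ≠ c) :
    QuadraticMap.polar (⇑(Q N)) (e a - e b) (e b - e c) = 2 := by
  have hsum : e a - e b + (e b - e c) = e a - e c := by abel
  rw [QuadraticMap.polar, hsum, Q_pair a c hac, Q_pair a b hab, Q_pair b c hbc]
  norm_num

end

end SchurCliff

namespace SchurCliff

noncomputable section
open CliffordAlgebra

variable {N : ℕ}

lemma cube {R : Type*} [Ring R] (x y : R) (hx : x*x = -2) (hy : y*y = -2)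
    (hxy : x*y + y*x = 2) : (x*y)^3 = -8 := by
  have hyx : y*x = 2 - x*y := eq_sub_of_add_eq' hxy
  calc (x*y)^3 = x*(y*x)*(y*x)*y := by noncomm_ring
    _ = x*(2 - x*y)*((2-x*y)*y) := by rw [hyx]; noncomm_ring
    _ = 4*(x*y) - 4*((x*x)*(y*y)) + (x*x)*((y*x)*(y*y)) := by noncomm_ring
    _ = 4*(x*y) - 4*((-2)*(-2)) + (-2)*((2 - x*y)*(-2)) := by rw [hx, hy, hyx]
    _ = -8 := by noncomm_ring <;> simp [zsmul_eq_mul] <;> norm_num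

abbrev A (N : ℕ) := CliffordAlgebra (Q N)

lemma algMap_neg_ofNat (r : ℕ) [r.AtLeastTwo] :
    algebraMap ℝ (A N) (-(OfNat.ofNat r)) = -(OfNat.ofNat r) := by
  rw [map_neg, map_ofNat]

def s : ℝ := (Real.sqrt 2)⁻¹

lemma s_mul_s : s * s = 1/2 := by
  rw [s, ← mul_inv, Real.mul_self_sqrt (by norm_num)]
  norm_num

def g (a b : Fin N) : A N := s • ι (Q N) (e a - e b)

lemma g_mul_g (a b : Fin N) (h : a ≠ b) : g a b * g a b = -1 := by
  rw [g, smul_mul_smul_comm, ι_sq_scalar, Q_pair a b h, s_mul_s, Algebra.smul_def,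
    ← map_mul]
  norm_num

lemma g_anticomm (a b c d : Fin N) (hab : a ≠ b) (hac : a ≠ c) (had : a ≠ d)
    (hbc : b ≠ c) (hbd : b ≠ d) (hcd : c ≠ d) :
    g a b * g c d = -(g c d * g a b) := by
  have h := ι_mul_ι_add_swap (Q := Q N) (e a - e b) (e c - e d)
  rw [polar_pair_quad a b c d hab hac had hbc hbd hcd, map_zero] at h
  have h2 : ι (Q N) (e a - e b) * ι (Q N) (e c - e d)
      = -(ι (Q N) (e c - e d) * ι (Q N) (e a - e b)) :=
    eq_neg_of_add_eq_zero_left h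
  rw [g, g, smul_mul_smul_comm, smul_mul_smul_comm, h2, smul_neg]

lemma g_braid (a b c : Fin N) (hab : a ≠ b) (hac : a ≠ c) (hbc : b ≠ c) :
    (g a b * g b c)^3 = -1 := by
  have hx : ι (Q N) (e a - e b) * ι (Q N) (e a - e b) = -2 := by
    rw [ι_sq_scalar, Q_pair a b hab, algMap_neg_ofNat]
  have hy : ι (Q N) (e b - e c) * ι (Q N) (e b - e c) = -2 := by
    rw [ι_sq_scalar, Q_pair b c hbc, algMap_neg_ofNat]
  have hxy : ι (Q N) (e a - e b) * ι (Q N) (e b - e c)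
      + ι (Q N) (e b - e c) * ι (Q N) (e a - e b) = 2 := by
    rw [ι_mul_ι_add_swap, polar_pair_adj a b c hab hac hbc, map_ofNat]
  have hc := cube _ _ hx hy hxy
  rw [g, g, smul_mul_smul_comm, smul_pow, hc, s_mul_s]
  rw [show (-8 : A N) = algebraMap ℝ (A N) (-8) from (algMap_neg_ofNat 8).symm,
    Algebra.smul_def, ← map_mul]
  norm_num

instance : Invertible (2 : ℝ) := invertibleOfNonzero two_ne_zero

instance : Nontrivial (A N) := inferInstance

lemma neg_one_ne_one_A : (-1 : A N) ≠ 1 := by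
  have h2 : Invertible (2 : A N) := by
    have := Invertible.map (algebraMap ℝ (A N)) (2 : ℝ)
    rwa [map_ofNat] at this
  intro h
  have h0 : (0 : A N) = 2 := by
    calc (0 : A N) = 1 + -1 := (add_neg_cancel 1).symm
      _ = 1 + 1 := by rw [h]
      _ = 2 := by norm_num
  haveI := h2
  exact Invertible.ne_zero (2 : A N) h0.symm

end
end SchurCliff

namespace SchurCliff
noncomputable section
open CliffordAlgebra
variable {N : ℕ}

def uu (a b : Fin N) (h : a ≠ b) : (A N)ˣ :=
  ⟨g a b, -g a b, by rw [mul_neg, g_mul_g a b h, neg_neg],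
    by rw [neg_mul, g_mul_g a b h, neg_neg]⟩

@[simp] lemma uu_val (a b : Fin N) (h : a ≠ b) : ((uu a b h : (A N)ˣ) : A N) = g a b := rfl

lemma neg_one_unit_ne : (-1 : (A N)ˣ) ≠ 1 := by
  intro h
  exact neg_one_ne_one_A (by simpa using congrArg Units.val h)

lemma uu_sq (a b : Fin N) (h : a ≠ b) : (uu a b h) ^ 2 = -1 := by
  refine Units.ext ?_
  rw [sq]
  simp [g_mul_g a b h]

lemma uu_comm_neg_one (a b : Fin N) (h : a ≠ b) :
    (-1 : (A N)ˣ) * uu a b h = uu a b h * (-1) := by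
  refine Units.ext ?_
  simp

lemma uu_anticomm (a b c d : Fin N) (hab : a ≠ b) (hac : a ≠ c) (had : a ≠ d)
    (hbc : b ≠ c) (hbd : b ≠ d) (hcd : c ≠ d) :
    uu a b hab * uu c d hcd = -1 * uu c d hcd * uu a b hab := by
  refine Units.ext ?_
  simp only [Units.val_mul, uu_val, Units.val_neg, Units.val_one, neg_mul, one_mul]
  exact g_anticomm a b c d hab hac had hbc hbd hcd

lemma uu_braid (a b c : Fin N) (hab : a ≠ b) (hbc : b ≠ c) (hac : a ≠ c) :
    (uu a b hab * uu b c hbc) ^ 3 = -1 := by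
  refine Units.ext ?_
  rw [Units.val_pow_eq_pow_val]
  simp only [Units.val_mul, uu_val, Units.val_neg, Units.val_one]
  exact g_braid a b c hab hac hbc

end
end SchurCliff

namespace SchurU

open PresentedGroup

variable {n : ℕ}

lemma relone {r : FreeGroup (SchurGen n)} (hr : r ∈ schurRels n) :
    PresentedGroup.mk (schurRels n) r = 1 :=
  (QuotientGroup.eq_one_iff _).mpr (Subgroup.subset_normalClosure hr)

lemma z_sq : (of none : PresentedGroup (schurRels n)) ^ 2 = 1 := by
  have := relone (n := n) (r := FreeGroup.of none ^ 2)
    (Or.inl (Or.inl (Or.inl (Or.inl rfl))))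
  simpa [PresentedGroup.of, map_pow] using this

lemma zt_comm (i : Fin (n-1)) :
    (of none : PresentedGroup (schurRels n)) * of (some i) = of (some i) * of none := by
  have := relone (n := n)
    (r := (FreeGroup.of none * FreeGroup.of (some i)) * (FreeGroup.of (some i) * FreeGroup.of none)⁻¹)
    (Or.inl (Or.inl (Or.inl (Or.inr ⟨i, rfl⟩))))
  simp only [map_mul, map_inv, mul_inv_eq_one] at this
  simpa [PresentedGroup.of] using this

lemma t_sq (i : Fin (n-1)) :
    (of (some i) : PresentedGroup (schurRels n)) ^ 2 = of none := by
  have := relone (n := n)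
    (r := FreeGroup.of (some i) ^ 2 * (FreeGroup.of none)⁻¹)
    (Or.inl (Or.inl (Or.inr ⟨i, rfl⟩)))
  simp only [map_mul, map_pow, map_inv, mul_inv_eq_one] at this
  simpa [PresentedGroup.of] using this

lemma braid_rel (i j : Fin (n-1)) (h : (j : ℕ) = (i : ℕ) + 1) :
    ((of (some i) : PresentedGroup (schurRels n)) * of (some j)) ^ 3 = of none := by
  have := relone (n := n)
    (r := (FreeGroup.of (some i) * FreeGroup.of (some j)) ^ 3 * (FreeGroup.of none)⁻¹)
    (Or.inl (Or.inr ⟨i, j, h, rfl⟩))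
  simp only [map_mul, map_pow, map_inv, mul_inv_eq_one] at this
  simpa [PresentedGroup.of] using this

lemma far_rel (i j : Fin (n-1)) (h : (i : ℕ) + 2 ≤ (j : ℕ) ∨ (j : ℕ) + 2 ≤ (i : ℕ)) :
    (of (some i) : PresentedGroup (schurRels n)) * of (some j)
      = of none * (of (some j) * of (some i)) := by
  have := relone (n := n)
    (r := (FreeGroup.of (some i) * FreeGroup.of (some j))
      * (FreeGroup.of none * FreeGroup.of (some j) * FreeGroup.of (some i))⁻¹)
    (Or.inr ⟨i, j, h, rfl⟩)
  simp only [map_mul, map_inv, mul_inv_eq_one] at this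
  simpa [PresentedGroup.of, mul_assoc] using this

lemma z_central (g : PresentedGroup (schurRels n)) :
    (of none : PresentedGroup (schurRels n)) * g = g * of none := by
  have htop : (Subgroup.centralizer {(of none : PresentedGroup (schurRels n))}) = ⊤ := by
    rw [eq_top_iff, ← PresentedGroup.closure_range_of (schurRels n), Subgroup.closure_le]
    rintro _ ⟨x, rfl⟩
    rw [SetLike.mem_coe, Subgroup.mem_centralizer_iff]
    rintro h ⟨rfl⟩
    cases x with
    | none => rfl
    | some i => exact zt_comm i
  have := Subgroup.mem_centralizer_iff.mp (htop ▸ Subgroup.mem_top g)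
  exact (this _ rfl)

lemma braid_of_cube {G : Type*} [Group G] {z a b : G} (hz2 : z * z = 1)
    (hza : z * a = a * z) (hzb : z * b = b * z)
    (ha : a * a = z) (hb : b * b = z) (hcube : (a*b)^3 = z) :
    a * b * a = b * a * b := by
  have hainv : a⁻¹ = z * a := inv_eq_of_mul_eq_one_left (by rw [mul_assoc, ha, hz2])
  have hbinv : b⁻¹ = z * b := inv_eq_of_mul_eq_one_left (by rw [mul_assoc, hb, hz2])
  have swapa : ∀ v : G, a * (z * v) = z * (a * v) := by
    intro v; rw [← mul_assoc, ← hza, mul_assoc]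
  have swapb : ∀ v : G, b * (z * v) = z * (b * v) := by
    intro v; rw [← mul_assoc, ← hzb, mul_assoc]
  have e1 : a*b*a = (a*b)^3 * (b⁻¹ * (a⁻¹ * b⁻¹)) := by
    rw [pow_succ, pow_two]
    simp [mul_assoc]
  rw [hcube, hbinv, hainv] at e1
  rw [e1]
  simp only [mul_assoc, swapa, swapb]
  rw [← mul_assoc z z, hz2, one_mul, ← mul_assoc z z, hz2, one_mul, ← mul_assoc]

lemma comm_lemma {G : Type*} [Group G] {z a b c : G} (hzz : z * z = 1)
    (swapz : ∀ u v : G, u * (z * v) = z * (u * v))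
    (sqa : a * a = z)
    (fab : b * a = z * (a * b)) (fac : c * a = z * (a * c)) (fbc : c * b = z * (b * c)) :
    (a * b) * (a * c) = z * ((a * c) * (a * b)) := by
  have lhs : (a * b) * (a * c) = b * c := by
    calc (a * b) * (a * c) = a * ((b * a) * c) := by group
      _ = a * ((z * (a * b)) * c) := by rw [fab]
      _ = z * (a * (a * (b * c))) := by simp only [mul_assoc, swapz]
      _ = z * ((a * a) * (b * c)) := by simp only [mul_assoc]
      _ = z * (z * (b * c)) := by rw [sqa]
      _ = b * c := by rw [← mul_assoc, hzz, one_mul]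
  have rhs : z * ((a * c) * (a * b)) = b * c := by
    calc z * ((a * c) * (a * b))
        = z * (a * ((c * a) * b)) := by group
      _ = z * (a * ((z * (a * c)) * b)) := by rw [fac]
      _ = z * (z * (a * (a * (c * b)))) := by simp only [mul_assoc, swapz]
      _ = a * (a * (c * b)) := by rw [← mul_assoc, hzz, one_mul]
      _ = (a * a) * (c * b) := by simp only [mul_assoc]
      _ = z * (z * (b * c)) := by rw [sqa, fbc]
      _ = b * c := by rw [← mul_assoc, hzz, one_mul]
  rw [lhs, rhs]

end SchurU

set_option maxHeartbeats 2000000 in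
open SchurU in
open scoped commutatorElement in
/-- **`π⁻¹(Aₙ)` is a stem extension of `Aₙ` (a Schur covering group) for `n ≥ 8`**
(Lemma 2.6). Let `n ≥ 8`, let `U` be the group presented by generators
`z, t₁, ..., t_{n-1}` and Schur's relations, and let `π : U → Sₙ` be the surjection with
`π(z) = 1` and `π(tᵢ) = (i, i+1)`. Then `V := π⁻¹(Aₙ)` is a stem extension of `Aₙ` with
kernel `⟨z⟩` of order 2: `⟨z⟩ ⊆ Z(V) ∩ [V, V]` and `V/⟨z⟩ ≅ Aₙ`; in particular
`|V| = n!`. -/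
theorem preimage_alternating_stem_extension (n : ℕ) (hn : 8 ≤ n)
    (π : PresentedGroup (schurRels n) →* Equiv.Perm (Fin n))
    (hπz : π (PresentedGroup.of none) = 1)
    (hπt : ∀ i : Fin (n - 1),
      π (PresentedGroup.of (some i)) =
        Equiv.swap ⟨i.1, by have := i.2; omega⟩ ⟨i.1 + 1, by have := i.2; omega⟩) :
    ∃ hz : (PresentedGroup.of (rels := schurRels n) none) ∈
        Subgroup.comap π (alternatingGroup (Fin n)),
      (⟨_, hz⟩ : Subgroup.comap π (alternatingGroup (Fin n))) ∈
          Subgroup.center ↥(Subgroup.comap π (alternatingGroup (Fin n))) ∧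
      (⟨_, hz⟩ : Subgroup.comap π (alternatingGroup (Fin n))) ∈
          commutator ↥(Subgroup.comap π (alternatingGroup (Fin n))) ∧
      (PresentedGroup.of (rels := schurRels n) none) ≠ 1 ∧
      (PresentedGroup.of (rels := schurRels n) none) ^ 2 = 1 ∧
      (∃ φ : ↥(Subgroup.comap π (alternatingGroup (Fin n))) →* ↥(alternatingGroup (Fin n)),
        Function.Surjective φ ∧
        φ.ker = Subgroup.zpowers (⟨_, hz⟩ : Subgroup.comap π (alternatingGroup (Fin n)))) ∧
      Nat.card ↥(Subgroup.comap π (alternatingGroup (Fin n))) = n.factorial := by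
  classical
  obtain ⟨m, rfl⟩ : ∃ m, n = m + 1 := ⟨n - 1, by omega⟩
  have hm : 7 ≤ m := by omega
  -- basic relations
  have hzsq : (PresentedGroup.of (rels := schurRels (m+1)) none) ^ 2 = 1 := SchurU.z_sq
  have hzz : (PresentedGroup.of (rels := schurRels (m+1)) none)
      * PresentedGroup.of none = 1 := by rw [← sq]; exact hzsq
  have hcent0 : ∀ g : PresentedGroup (schurRels (m+1)),
      PresentedGroup.of none * g = g * PresentedGroup.of none := SchurU.z_central
  -- z is nontrivial, via the Clifford algebra representation
  have hzne : (PresentedGroup.of (rels := schurRels (m+1)) none) ≠ 1 := by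
    have hne : ∀ (i : Fin (m + 1 - 1)),
        (⟨i.1, by have := i.2; omega⟩ : Fin (m+1)) ≠ ⟨i.1 + 1, by have := i.2; omega⟩ := by
      intro i
      simp [Fin.ext_iff]
    set f : SchurGen (m+1) → (SchurCliff.A (m+1))ˣ := fun o =>
      Option.rec (-1) (fun i => SchurCliff.uu ⟨i.1, by have := i.2; omega⟩
        ⟨i.1 + 1, by have := i.2; omega⟩ (hne i)) o with hf
    have hrels : ∀ r ∈ schurRels (m+1), FreeGroup.lift f r = 1 := by
      intro r hr
      simp only [schurRels, Set.mem_union, Set.mem_setOf_eq, Set.mem_singleton_iff] at hr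
      rcases hr with ((((h | ⟨i, h⟩) | ⟨i, h⟩) | ⟨i, j, hij, h⟩) | ⟨i, j, hij, h⟩) <;> subst h <;>
        simp only [map_mul, map_pow, map_inv, FreeGroup.lift_apply_of, hf]
      · exact Units.ext (by simp)
      · rw [mul_inv_eq_one]
        exact SchurCliff.uu_comm_neg_one _ _ _
      · rw [SchurCliff.uu_sq, mul_inv_eq_one]
      · have hj1 : (⟨j.1, by have := j.2; omega⟩ : Fin (m+1))
            = ⟨i.1 + 1, by have := i.2; omega⟩ := by simp [Fin.ext_iff, hij]
        have hj2 : (⟨j.1 + 1, by have := j.2; omega⟩ : Fin (m+1))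
            = ⟨i.1 + 2, by have := j.2; omega⟩ := by simp [Fin.ext_iff, hij]
        rw [mul_inv_eq_one]
        have := SchurCliff.uu_braid (N := m+1) ⟨i.1, by have := i.2; omega⟩
          ⟨i.1 + 1, by have := i.2; omega⟩ ⟨i.1 + 2, by have := j.2; omega⟩
          (by simp [Fin.ext_iff]) (by simp [Fin.ext_iff]) (by simp [Fin.ext_iff])
        convert this using 4 <;> simp [Fin.ext_iff, hij]
      · rw [mul_inv_eq_one]
        exact SchurCliff.uu_anticomm _ _ _ _
          (by simp [Fin.ext_iff]) (by simp [Fin.ext_iff]; omega) (by simp [Fin.ext_iff]; omega)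
          (by simp [Fin.ext_iff]; omega) (by simp [Fin.ext_iff]; omega) (by simp [Fin.ext_iff])
    intro h1
    have := congrArg (PresentedGroup.toGroup hrels) h1
    rw [map_one, PresentedGroup.toGroup.of] at this
    exact SchurCliff.neg_one_unit_ne this
  -- the finiteness bound coming from the covering argument
  set T : ℕ → PresentedGroup (schurRels (m+1)) := fun i =>
    if h : i < m then PresentedGroup.of (some (⟨i, h⟩ : Fin (m+1-1))) else 1 with hT
  have hTpos : ∀ i (h : i < m), T i = PresentedGroup.of (some (⟨i, h⟩ : Fin (m+1-1))) :=
    fun i h => dif_pos h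
  have hcov := SchurCover.cover m (PresentedGroup.of (rels := schurRels (m+1)) none) T
    hzz
    (by
      intro i
      by_cases h : i < m
      · rw [hTpos i h]; exact SchurU.zt_comm _
      · simp [hT, dif_neg h])
    (by
      intro i hi
      rw [hTpos i hi, ← sq]
      exact SchurU.t_sq _)
    (by
      intro i hi
      rw [hTpos i (by omega), hTpos (i+1) hi]
      refine braid_of_cube hzz (SchurU.zt_comm _) (SchurU.zt_comm _) ?_ ?_ ?_
      · rw [← sq]; exact SchurU.t_sq _
      · rw [← sq]; exact SchurU.t_sq _
      · exact SchurU.braid_rel _ _ rfl)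
    (by
      intro i j hij hj
      rw [hTpos i (by omega), hTpos j hj]
      exact SchurU.far_rel _ _ (Or.inl hij))
    m le_rfl
  obtain ⟨Tfin, hTsub, hTcard⟩ := hcov
  have htop : Subgroup.closure ({PresentedGroup.of (rels := schurRels (m+1)) none}
      ∪ T '' Set.Iio m) = ⊤ := by
    rw [eq_top_iff, ← PresentedGroup.closure_range_of (schurRels (m+1))]
    apply Subgroup.closure_mono
    rintro _ ⟨x, rfl⟩
    cases x with
    | none => exact Or.inl rfl
    | some i => exact Or.inr ⟨i.1, i.2, by rw [hTpos i.1 i.2]⟩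
  have huniv : ∀ u : PresentedGroup (schurRels (m+1)), u ∈ Tfin := by
    intro u
    exact hTsub (by rw [htop]; trivial)
  have hfinU : Finite (PresentedGroup (schurRels (m+1))) := by
    have : Set.univ ⊆ (Tfin : Set (PresentedGroup (schurRels (m+1)))) := fun u _ => huniv u
    exact Set.finite_univ_iff.mp (Set.Finite.subset Tfin.finite_toSet this)
  have hcardU : Nat.card (PresentedGroup (schurRels (m+1))) ≤ 2 * (m+1).factorial := by
    have h1 : Nat.card (PresentedGroup (schurRels (m+1))) ≤ Nat.card {x // x ∈ Tfin} :=
      Nat.card_le_card_of_injective (fun u => ⟨u, huniv u⟩)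
        (fun a b h => congrArg Subtype.val h)
    rw [Nat.card_eq_finsetCard] at h1
    exact h1.trans hTcard
  -- surjectivity of π
  have hsurj : Function.Surjective π := by
    rw [← MonoidHom.range_eq_top, eq_top_iff,
      ← Subgroup.closure_eq_top_of_mclosure_eq_top (Equiv.Perm.mclosure_swap_castSucc_succ m),
      Subgroup.closure_le]
    rintro _ ⟨i, rfl⟩
    exact ⟨PresentedGroup.of (some i), (hπt i).trans rfl⟩
  -- kernel of π is ⟨z⟩
  have hle : Subgroup.zpowers (PresentedGroup.of (rels := schurRels (m+1)) none) ≤ π.ker :=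
    Subgroup.zpowers_le.mpr hπz
  have hq : Nat.card (PresentedGroup (schurRels (m+1)) ⧸ π.ker) = (m+1).factorial := by
    rw [Nat.card_congr (QuotientGroup.quotientKerEquivOfSurjective π hsurj).toEquiv,
      Nat.card_eq_fintype_card, Fintype.card_perm, Fintype.card_fin]
  have hk2 : Nat.card π.ker ≤ 2 := by
    have htotal := Subgroup.card_eq_card_quotient_mul_card_subgroup π.ker
    rw [hq] at htotal
    refine Nat.le_of_mul_le_mul_left ?_ (Nat.factorial_pos (m+1))
    calc (m+1).factorial * Nat.card π.ker = Nat.card (PresentedGroup (schurRels (m+1))) :=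
          htotal.symm
      _ ≤ 2 * (m+1).factorial := hcardU
      _ = (m+1).factorial * 2 := by ring
  haveI : Fact (Nat.Prime 2) := ⟨Nat.prime_two⟩
  have hord : orderOf (PresentedGroup.of (rels := schurRels (m+1)) none) = 2 :=
    orderOf_eq_prime hzsq hzne
  have hcardzp :
      Nat.card (Subgroup.zpowers (PresentedGroup.of (rels := schurRels (m+1)) none)) = 2 := by
    rw [Nat.card_zpowers, hord]
  have hkereq : π.ker
      = Subgroup.zpowers (PresentedGroup.of (rels := schurRels (m+1)) none) := by
    refine (SetLike.ext' ?_).symm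
    refine Set.eq_of_subset_of_ncard_le hle ?_ (Set.toFinite _)
    rw [← Nat.card_coe_set_eq, ← Nat.card_coe_set_eq]
    simp only [SetLike.coe_sort_coe]
    rw [hcardzp]
    exact hk2
  -- membership of z in V
  have hz : (PresentedGroup.of (rels := schurRels (m+1)) none) ∈
      Subgroup.comap π (alternatingGroup (Fin (m+1))) := by
    rw [Subgroup.mem_comap, hπz]
    exact one_mem _
  have hzVmem : ∀ g : PresentedGroup (schurRels (m+1)),
      g ∈ Subgroup.zpowers (PresentedGroup.of (rels := schurRels (m+1)) none) →
      g = 1 ∨ g = PresentedGroup.of none := by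
    rintro g ⟨k, hk⟩
    have hz2' : (PresentedGroup.of (rels := schurRels (m+1)) none) ^ (2:ℤ) = 1 := by
      rw [show (2:ℤ) = ((2:ℕ):ℤ) from rfl, zpow_natCast, hzsq]
    rcases Int.even_or_odd k with ⟨l, hl⟩ | ⟨l, hl⟩
    · left
      rw [← hk, hl]
      show PresentedGroup.of none ^ (l + l) = 1
      rw [show l + l = 2 * l by ring, zpow_mul, hz2', one_zpow]
    · right
      rw [← hk, hl]
      show PresentedGroup.of none ^ (2 * l + 1) = PresentedGroup.of none
      rw [zpow_add, zpow_mul, hz2', one_zpow, one_mul, zpow_one]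
  have hfinal : (∃ φ : ↥(Subgroup.comap π (alternatingGroup (Fin (m+1)))) →*
        ↥(alternatingGroup (Fin (m+1))),
      Function.Surjective φ ∧
        φ.ker = Subgroup.zpowers
          (⟨_, hz⟩ : Subgroup.comap π (alternatingGroup (Fin (m+1))))) ∧
      Nat.card ↥(Subgroup.comap π (alternatingGroup (Fin (m+1)))) = (m+1).factorial := by
    haveI := hfinU
    let φ : ↥(Subgroup.comap π (alternatingGroup (Fin (m+1)))) →*
        ↥(alternatingGroup (Fin (m+1))) :=
      MonoidHom.codRestrict
        (π.comp (Subgroup.comap π (alternatingGroup (Fin (m+1)))).subtype)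
        (alternatingGroup (Fin (m+1))) (fun x => x.2)
    have hφs : Function.Surjective φ := by
      intro σ
      obtain ⟨u, hu⟩ := hsurj σ.1
      have huV : u ∈ Subgroup.comap π (alternatingGroup (Fin (m+1))) := by
        rw [Subgroup.mem_comap, hu]
        exact σ.2
      exact ⟨⟨u, huV⟩, Subtype.ext hu⟩
    have hzV2 : (⟨PresentedGroup.of none, hz⟩ :
        Subgroup.comap π (alternatingGroup (Fin (m+1)))) ^ 2 = 1 := by
      refine Subtype.ext ?_
      rw [SubmonoidClass.coe_pow]
      exact hzsq
    have hzVne : (⟨PresentedGroup.of none, hz⟩ :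
        Subgroup.comap π (alternatingGroup (Fin (m+1)))) ≠ 1 :=
      fun h => hzne (congrArg Subtype.val h)
    have hφk : φ.ker = Subgroup.zpowers
        (⟨PresentedGroup.of none, hz⟩ :
          Subgroup.comap π (alternatingGroup (Fin (m+1)))) := by
      refine le_antisymm ?_ (Subgroup.zpowers_le.mpr ?_)
      · intro x hx
        have hx1 : x.1 ∈ π.ker := by
          rw [MonoidHom.mem_ker]
          exact congrArg Subtype.val hx
        rw [hkereq] at hx1
        rcases hzVmem x.1 hx1 with h1 | h1
        · have hx2 : x = 1 := Subtype.ext h1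
          rw [hx2]
          exact one_mem _
        · have hx2 : x = ⟨PresentedGroup.of none, hz⟩ := Subtype.ext h1
          rw [hx2]
          exact Subgroup.mem_zpowers _
      · rw [MonoidHom.mem_ker]
        exact Subtype.ext hπz
    have h1 : Nat.card ↥(Subgroup.comap π (alternatingGroup (Fin (m+1))))
        = Nat.card (↥(Subgroup.comap π (alternatingGroup (Fin (m+1)))) ⧸ φ.ker)
          * Nat.card φ.ker :=
      Subgroup.card_eq_card_quotient_mul_card_subgroup φ.ker
    have h2 : Nat.card (↥(Subgroup.comap π (alternatingGroup (Fin (m+1)))) ⧸ φ.ker)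
        = Nat.card ↥(alternatingGroup (Fin (m+1))) :=
      Nat.card_congr (QuotientGroup.quotientKerEquivOfSurjective φ hφs).toEquiv
    have h3 : Nat.card φ.ker = 2 := by
      rw [hφk, Nat.card_zpowers]
      exact orderOf_eq_prime hzV2 hzVne
    haveI : Nontrivial (Fin (m+1)) := Fin.nontrivial_iff_two_le.mpr (by omega)
    have h4 : 2 * Nat.card ↥(alternatingGroup (Fin (m+1))) = (m+1).factorial := by
      rw [Nat.card_eq_fintype_card, two_mul_card_alternatingGroup, Fintype.card_perm,
        Fintype.card_fin]
    refine ⟨⟨φ, hφs, hφk⟩, ?_⟩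
    rw [h1, h2, h3]
    omega
  refine ⟨hz, ?_, ?_, hzne, hzsq, hfinal.1, hfinal.2⟩
  · -- center
    rw [Subgroup.mem_center_iff]
    intro g
    exact Subtype.ext ((hcent0 g.1).symm)
  · -- commutator
    have flip' : ∀ a b : PresentedGroup (schurRels (m+1)),
        a * b = PresentedGroup.of none * (b * a) →
        b * a = PresentedGroup.of none * (a * b) := fun a b h => SchurCover.flip _ hzz h
    have swapz : ∀ u v : PresentedGroup (schurRels (m+1)),
        u * (PresentedGroup.of none * v) = PresentedGroup.of none * (u * v) := by
      intro u v
      rw [← mul_assoc, ← hcent0 u, mul_assoc]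
    let i0 : Fin (m+1-1) := ⟨0, by omega⟩
    let i2 : Fin (m+1-1) := ⟨2, by omega⟩
    let i4 : Fin (m+1-1) := ⟨4, by omega⟩
    let t0 : PresentedGroup (schurRels (m+1)) := PresentedGroup.of (some i0)
    let t2 : PresentedGroup (schurRels (m+1)) := PresentedGroup.of (some i2)
    let t4 : PresentedGroup (schurRels (m+1)) := PresentedGroup.of (some i4)
    have hab : (t0 * t2) * (t0 * t4) = PresentedGroup.of none * ((t0 * t4) * (t0 * t2)) :=
      SchurU.comm_lemma hzz swapz
        (by rw [← sq]; exact SchurU.t_sq i0)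
        (flip' _ _ (SchurU.far_rel i0 i2 (Or.inl (by norm_num))))
        (flip' _ _ (SchurU.far_rel i0 i4 (Or.inl (by norm_num))))
        (flip' _ _ (SchurU.far_rel i2 i4 (Or.inl (by norm_num))))
    have mem02 : t0 * t2 ∈ Subgroup.comap π (alternatingGroup (Fin (m+1))) := by
      rw [Subgroup.mem_comap, map_mul, show π t0 = _ from hπt i0, show π t2 = _ from hπt i2,
        Equiv.Perm.mem_alternatingGroup, map_mul,
        Equiv.Perm.sign_swap (by simp [Fin.ext_iff]),
        Equiv.Perm.sign_swap (by simp [Fin.ext_iff])]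
      norm_num
    have mem04 : t0 * t4 ∈ Subgroup.comap π (alternatingGroup (Fin (m+1))) := by
      rw [Subgroup.mem_comap, map_mul, show π t0 = _ from hπt i0, show π t4 = _ from hπt i4,
        Equiv.Perm.mem_alternatingGroup, map_mul,
        Equiv.Perm.sign_swap (by simp [Fin.ext_iff]),
        Equiv.Perm.sign_swap (by simp [Fin.ext_iff])]
      norm_num
    have hzc : (⟨PresentedGroup.of none, hz⟩ :
        Subgroup.comap π (alternatingGroup (Fin (m+1))))
        = ⁅(⟨t0 * t2, mem02⟩ : Subgroup.comap π (alternatingGroup (Fin (m+1)))),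
           (⟨t0 * t4, mem04⟩ : Subgroup.comap π (alternatingGroup (Fin (m+1))))⁆ := by
      refine Subtype.ext ?_
      show PresentedGroup.of none = (t0 * t2) * (t0 * t4) * (t0 * t2)⁻¹ * (t0 * t4)⁻¹
      rw [hab]
      group
    rw [hzc]
    exact Subgroup.commutator_mem_commutator (Subgroup.mem_top _) (Subgroup.mem_top _)
end
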